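/- arXiv:1702.02790 — 9 statements merged into one kernel-verified Lean document; each statement's English description precedes it below -/
import Mathlib

section
/- Let Q be an N×N real matrix and π ∈ ℝ^N a row vector, and suppose there exist constants c > 0 and λ > 0 such that ‖e^{Qu} − 𝟙π‖ ≤ c e^{−λu} for all u ≥ 0. Let s > 0 and define D(t) = ∫₀ᵗ (e^{Qu} − 𝟙π) du. Then sI − Q is invertible and the Laplace transform of the transient deviation matrix satisfies ∫₀^∞ e^{−st} D(t) dt = (1/s)(sI − Q)^{−1} − (1/s²)𝟙π. -/
open Matrix MeasureTheory

section auxLinfty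

attribute [local instance] Matrix.linftyOpNormedRing Matrix.linftyOpNormedAlgebra

theorem auxExpSlope (N : ℕ) (Q : Matrix (Fin N) (Fin N) ℝ) (t : ℝ) :
    Filter.Tendsto (slope (fun u : ℝ => NormedSpace.exp (u • Q)) t) (nhdsWithin t {t}ᶜ)
      (nhds (Q * NormedSpace.exp (t • Q))) :=
  hasDerivAt_iff_tendsto_slope.mp (hasDerivAt_exp_smul_const' Q t)

theorem auxExpComm (N : ℕ) (Q : Matrix (Fin N) (Fin N) ℝ) (t : ℝ) :
    Commute Q (NormedSpace.exp (t • Q)) :=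
  ((Commute.refl Q).smul_right t).exp_right

end auxLinfty

attribute [local instance] Matrix.normedAddCommGroup Matrix.normedSpace

set_option maxHeartbeats 1000000

/-- Under exponential ergodicity `‖e^{Qu} − 𝟙π‖ ≤ c e^{−λu}`, for every `s > 0`
the matrix `sI − Q` is invertible and the Laplace transform of the transient deviation matrix
`D(t) = ∫₀ᵗ (e^{Qu} − 𝟙π) du` satisfies
`∫₀^∞ e^{−st} D(t) dt = (1/s)(sI − Q)⁻¹ − (1/s²) 𝟙π`. -/
theorem laplace_transform_transient_deviation_matrix
    (N : ℕ) (Q : Matrix (Fin N) (Fin N) ℝ)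
    (π : Fin N → ℝ)
    (onePi : Matrix (Fin N) (Fin N) ℝ)
    (honePi : ∀ i j, onePi i j = π j)
    (c lam : ℝ) (hc : 0 < c) (hlam : 0 < lam)
    (hErg : ∀ u : ℝ, 0 ≤ u →
      ‖NormedSpace.exp (u • Q) - onePi‖ ≤ c * Real.exp (-lam * u))
    (s : ℝ) (hs : 0 < s)
    (D : ℝ → Matrix (Fin N) (Fin N) ℝ)
    (hD : ∀ t : ℝ, D t = ∫ u in (0:ℝ)..t, (NormedSpace.exp (u • Q) - onePi)) :
    IsUnit (s • (1 : Matrix (Fin N) (Fin N) ℝ) - Q) ∧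
      (∫ t in Set.Ioi (0:ℝ), Real.exp (-s * t) • D t) =
        (1 / s) • (s • (1 : Matrix (Fin N) (Fin N) ℝ) - Q)⁻¹ - (1 / s ^ 2) • onePi := by
  letI : ContinuousENorm (Matrix (Fin N) (Fin N) ℝ) :=
    inferInstanceAs (ContinuousENorm (Fin N → Fin N → ℝ))
  letI : TopologicalSpace.PseudoMetrizableSpace (Matrix (Fin N) (Fin N) ℝ) :=
    inferInstanceAs (TopologicalSpace.PseudoMetrizableSpace (Fin N → Fin N → ℝ))
  set E : ℝ → Matrix (Fin N) (Fin N) ℝ := fun u => NormedSpace.exp (u • Q) with hEdef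
  set A : Matrix (Fin N) (Fin N) ℝ := s • (1 : Matrix (Fin N) (Fin N) ℝ) - Q with hAdef
  -- derivative of E
  have hEderiv : ∀ t : ℝ, HasDerivAt E (Q * E t) t := by
    intro t
    refine hasDerivAt_iff_tendsto_slope.mpr ?_
    exact auxExpSlope N Q t
  have hEcont : Continuous E :=
    continuous_iff_continuousAt.mpr fun t => (hEderiv t).differentiableAt.continuousAt
  have hE0 : E 0 = 1 := by
    simp only [hEdef, zero_smul]
    exact NormedSpace.exp_zero
  -- bound on E
  have hEbound : ∀ t : ℝ, 0 ≤ t → ‖E t‖ ≤ c + ‖onePi‖ := by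
    intro t ht
    have h1 : ‖E t‖ ≤ ‖E t - onePi‖ + ‖onePi‖ := by
      calc ‖E t‖ = ‖E t - onePi + onePi‖ := by rw [sub_add_cancel]
        _ ≤ ‖E t - onePi‖ + ‖onePi‖ := norm_add_le _ _
    have h2 : ‖E t - onePi‖ ≤ c * Real.exp (-lam * t) := hErg t ht
    have h3 : Real.exp (-lam * t) ≤ 1 := Real.exp_le_one_iff.mpr (by nlinarith)
    nlinarith [norm_nonneg onePi]
  -- exp tendsto and integrability helpers
  have hexp_tendsto : ∀ b : ℝ, 0 < b →
      Filter.Tendsto (fun t : ℝ => Real.exp (-b * t)) Filter.atTop (nhds 0) := by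
    intro b hb
    have h1 : Filter.Tendsto (fun t : ℝ => b * t) Filter.atTop Filter.atTop :=
      Filter.Tendsto.const_mul_atTop hb Filter.tendsto_id
    have h2 : Filter.Tendsto (fun t : ℝ => Real.exp (-(b * t))) Filter.atTop (nhds 0) :=
      Real.tendsto_exp_atBot.comp (Filter.tendsto_neg_atTop_atBot.comp h1)
    simpa only [neg_mul] using h2
  have hscalar : ∀ b : ℝ, 0 < b →
      (∫ t in Set.Ioi (0:ℝ), Real.exp (-b * t)) = 1 / b := by
    intro b hb
    have hderiv : ∀ x ∈ Set.Ici (0:ℝ),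
        HasDerivAt (fun t : ℝ => -(1/b) * Real.exp (-b * t)) (Real.exp (-b * x)) x := by
      intro x _
      have h1 : HasDerivAt (fun t : ℝ => -b * t) (-b) x := by
        simpa using (hasDerivAt_id x).const_mul (-b)
      have h3 := (h1.exp).const_mul (-(1/b))
      refine h3.congr_deriv (Eq.symm ?_)
      rw [show -(1/b) * (Real.exp (-b * x) * -b) = Real.exp (-b * x) * (b * (1/b)) by ring,
        mul_one_div_cancel hb.ne', mul_one]
    have hlim : Filter.Tendsto (fun t : ℝ => -(1/b) * Real.exp (-b * t))
        Filter.atTop (nhds 0) := by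
      simpa using (hexp_tendsto b hb).const_mul (-(1/b))
    have h := integral_Ioi_of_hasDerivAt_of_tendsto' hderiv (exp_neg_integrableOn_Ioi 0 hb) hlim
    rw [h]
    simp
  -- generic domination
  have hexpcont : Continuous (fun t : ℝ => Real.exp (-s * t)) :=
    Real.continuous_exp.comp (continuous_const.mul continuous_id)
  have hdom : ∀ (f : ℝ → Matrix (Fin N) (Fin N) ℝ) (K : ℝ), Continuous f →
      (∀ t : ℝ, 0 ≤ t → ‖f t‖ ≤ K) →
      IntegrableOn (fun t => Real.exp (-s * t) • f t) (Set.Ioi 0) := by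
    intro f K hf hK
    refine Integrable.mono' ((exp_neg_integrableOn_Ioi 0 hs).const_mul K)
      ((hexpcont.smul hf).aestronglyMeasurable) ?_
    filter_upwards [self_mem_ae_restrict measurableSet_Ioi] with t ht
    rw [norm_smul, Real.norm_eq_abs, abs_of_pos (Real.exp_pos _)]
    calc Real.exp (-s * t) * ‖f t‖ ≤ Real.exp (-s * t) * K :=
          mul_le_mul_of_nonneg_left (hK t (le_of_lt ht)) (Real.exp_pos _).le
      _ = K * Real.exp (-s * t) := mul_comm _ _
  have hI1 : IntegrableOn (fun t => Real.exp (-s * t) • E t) (Set.Ioi 0) :=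
    hdom E (c + ‖onePi‖) hEcont hEbound
  -- the left/right multiplication CLMs
  let L : Matrix (Fin N) (Fin N) ℝ →L[ℝ] Matrix (Fin N) (Fin N) ℝ :=
    LinearMap.toContinuousLinearMap (LinearMap.mulLeft ℝ A)
  let L' : Matrix (Fin N) (Fin N) ℝ →L[ℝ] Matrix (Fin N) (Fin N) ℝ :=
    LinearMap.toContinuousLinearMap (LinearMap.mulRight ℝ A)
  have hLapp : ∀ x, L x = A * x := fun x => rfl
  have hL'app : ∀ x, L' x = x * A := fun x => rfl
  set R : Matrix (Fin N) (Fin N) ℝ := ∫ t in Set.Ioi (0:ℝ), Real.exp (-s * t) • E t with hRdef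
  -- derivative of e^{-st} E t
  have hg1 : ∀ t : ℝ, HasDerivAt (fun u => Real.exp (-s * u) • E u)
      (-(Real.exp (-s * t) • (A * E t))) t := by
    intro t
    have h1 : HasDerivAt (fun u : ℝ => -s * u) (-s) t := by
      simpa using (hasDerivAt_id t).const_mul (-s)
    have hsc : HasDerivAt (fun u : ℝ => Real.exp (-s * u)) (Real.exp (-s * t) * -s) t := h1.exp
    have h := hsc.smul (hEderiv t)
    refine h.congr_deriv (Eq.symm ?_)
    rw [hAdef, Matrix.sub_mul, Matrix.smul_mul, Matrix.one_mul, smul_sub, neg_sub, smul_smul]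
    rw [sub_eq_add_neg, ← neg_smul, ← mul_neg]
  have hEtend : Filter.Tendsto (fun t => Real.exp (-s * t) • E t) Filter.atTop (nhds 0) := by
    have hg0 : Filter.Tendsto (fun t : ℝ => (c + ‖onePi‖) * Real.exp (-s * t))
        Filter.atTop (nhds 0) := by
      simpa using (hexp_tendsto s hs).const_mul (c + ‖onePi‖)
    refine squeeze_zero_norm' ?_ hg0
    filter_upwards [Filter.eventually_ge_atTop (0:ℝ)] with t ht
    rw [norm_smul, Real.norm_eq_abs, abs_of_pos (Real.exp_pos _)]
    calc Real.exp (-s * t) * ‖E t‖ ≤ Real.exp (-s * t) * (c + ‖onePi‖) :=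
          mul_le_mul_of_nonneg_left (hEbound t ht) (Real.exp_pos _).le
      _ = (c + ‖onePi‖) * Real.exp (-s * t) := mul_comm _ _
  have heqL : ∀ t : ℝ, Real.exp (-s * t) • (A * E t) = L (Real.exp (-s * t) • E t) := by
    intro t
    simp only [_root_.map_smul]
    rw [hLapp]
  have hint2 : IntegrableOn (fun t => Real.exp (-s * t) • (A * E t)) (Set.Ioi 0) := by
    simp_rw [heqL]
    exact L.integrable_comp hI1
  have hIntOne : (∫ t in Set.Ioi (0:ℝ), Real.exp (-s * t) • (A * E t)) = 1 := by
    have h0 := integral_Ioi_of_hasDerivAt_of_tendsto'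
      (f' := fun t => -(Real.exp (-s * t) • (A * E t)))
      (fun t _ => hg1 t) hint2.neg hEtend
    rw [integral_neg] at h0
    rw [show (0 : Matrix (Fin N) (Fin N) ℝ) - Real.exp (-s * 0) • E 0 = -1 by
      simp [hE0]] at h0
    exact neg_inj.mp h0
  have hARone : A * R = 1 := by
    calc A * R = L R := (hLapp R).symm
      _ = ∫ t in Set.Ioi (0:ℝ), L (Real.exp (-s * t) • E t) := (L.integral_comp_comm hI1).symm
      _ = ∫ t in Set.Ioi (0:ℝ), Real.exp (-s * t) • (A * E t) := by simp_rw [heqL]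
      _ = 1 := hIntOne
  have hcommA : ∀ t : ℝ, E t * A = A * E t := by
    intro t
    exact (Commute.sub_left ((Commute.one_left (E t)).smul_left s) (auxExpComm N Q t)).symm
  have hRAone : R * A = 1 := by
    calc R * A = L' R := (hL'app R).symm
      _ = ∫ t in Set.Ioi (0:ℝ), L' (Real.exp (-s * t) • E t) := (L'.integral_comp_comm hI1).symm
      _ = ∫ t in Set.Ioi (0:ℝ), Real.exp (-s * t) • (A * E t) := by
          apply setIntegral_congr_fun measurableSet_Ioi
          intro t _
          simp only [_root_.map_smul]
          rw [hL'app, hcommA t]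
      _ = 1 := hIntOne
  have hUnit : IsUnit A := ⟨⟨A, R, hARone, hRAone⟩, rfl⟩
  have hAinv : A⁻¹ = R := Matrix.inv_eq_right_inv hARone
  refine ⟨hUnit, ?_⟩
  -- Part 2 : the Laplace transform of D
  have hDfun : D = fun t => ∫ u in (0:ℝ)..t, (E u - onePi) := funext hD
  have hFcont : Continuous (fun u : ℝ => E u - onePi) := hEcont.sub continuous_const
  have hFbound : ∀ t : ℝ, 0 ≤ t → ‖E t - onePi‖ ≤ c := by
    intro t ht
    have h3 : Real.exp (-lam * t) ≤ 1 := Real.exp_le_one_iff.mpr (by nlinarith)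
    have := hErg t ht
    nlinarith
  have hDderiv : ∀ t : ℝ, HasDerivAt D (E t - onePi) t := by
    intro t
    rw [hDfun]
    exact (intervalIntegral.integral_hasStrictDerivAt_right
      (hFcont.intervalIntegrable _ _) (hFcont.stronglyMeasurableAtFilter _ _)
      hFcont.continuousAt).hasDerivAt
  have hDcont : Continuous D :=
    continuous_iff_continuousAt.mpr fun t => (hDderiv t).differentiableAt.continuousAt
  have hD0 : D 0 = 0 := by rw [hDfun]; simp
  -- bound on D
  have hIlam : IntegrableOn (fun u : ℝ => c * Real.exp (-lam * u)) (Set.Ioi 0) :=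
    (exp_neg_integrableOn_Ioi 0 hlam).const_mul c
  have hDbound : ∀ t : ℝ, 0 ≤ t → ‖D t‖ ≤ c * (1 / lam) := by
    intro t ht
    rw [hDfun]
    simp only
    rw [intervalIntegral.integral_of_le ht]
    calc ‖∫ u in Set.Ioc (0:ℝ) t, (E u - onePi)‖
        ≤ ∫ u in Set.Ioc (0:ℝ) t, c * Real.exp (-lam * u) := by
          apply norm_integral_le_of_norm_le (hIlam.mono_set Set.Ioc_subset_Ioi_self)
          filter_upwards [self_mem_ae_restrict measurableSet_Ioc] with u hu
          exact hErg u hu.1.le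
      _ ≤ ∫ u in Set.Ioi (0:ℝ), c * Real.exp (-lam * u) := by
          apply setIntegral_mono_set hIlam
          · filter_upwards with u
            positivity
          · exact HasSubset.Subset.eventuallyLE Set.Ioc_subset_Ioi_self
      _ = c * (1 / lam) := by
          rw [MeasureTheory.integral_const_mul, hscalar lam hlam]
  -- integrability
  have hI3 : IntegrableOn (fun t => Real.exp (-s * t) • D t) (Set.Ioi 0) :=
    hdom D (c * (1 / lam)) hDcont hDbound
  have hI4 : IntegrableOn (fun t => Real.exp (-s * t) • (E t - onePi)) (Set.Ioi 0) :=
    hdom (fun t => E t - onePi) c hFcont hFbound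
  have hI4' : IntegrableOn
      (fun t => (-(1/s) * Real.exp (-s * t)) • (E t - onePi)) (Set.Ioi 0) := by
    have : (fun t : ℝ => (-(1/s) * Real.exp (-s * t)) • (E t - onePi)) =
        fun t => (-(1/s)) • (Real.exp (-s * t) • (E t - onePi)) := by
      funext t; rw [← smul_smul]
    rw [this]
    exact Integrable.smul (-(1/s)) hI4
  -- IBP for D
  have hh : ∀ t : ℝ, HasDerivAt (fun u => (-(1/s) * Real.exp (-s * u)) • D u)
      ((-(1/s) * Real.exp (-s * t)) • (E t - onePi) + Real.exp (-s * t) • D t) t := by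
    intro t
    have h1 : HasDerivAt (fun u : ℝ => -s * u) (-s) t := by
      simpa using (hasDerivAt_id t).const_mul (-s)
    have hsc : HasDerivAt (fun u : ℝ => -(1/s) * Real.exp (-s * u))
        (Real.exp (-s * t)) t := by
      have h3 := (h1.exp).const_mul (-(1/s))
      refine h3.congr_deriv (Eq.symm ?_)
      rw [show -(1/s) * (Real.exp (-s * t) * -s) = Real.exp (-s * t) * (s * (1/s)) by ring,
        mul_one_div_cancel hs.ne', mul_one]
    exact hsc.smul (hDderiv t)
  have hhtend : Filter.Tendsto (fun t => (-(1/s) * Real.exp (-s * t)) • D t)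
      Filter.atTop (nhds 0) := by
    have hg0 : Filter.Tendsto (fun t : ℝ => ((1/s) * (c * (1/lam))) * Real.exp (-s * t))
        Filter.atTop (nhds 0) := by
      simpa using (hexp_tendsto s hs).const_mul ((1/s) * (c * (1/lam)))
    refine squeeze_zero_norm' ?_ hg0
    filter_upwards [Filter.eventually_ge_atTop (0:ℝ)] with t ht
    rw [norm_smul, Real.norm_eq_abs]
    have habs : |(-(1/s) * Real.exp (-s * t))| = (1/s) * Real.exp (-s * t) := by
      rw [abs_mul, abs_neg, abs_of_pos (by positivity : (0:ℝ) < 1/s),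
        abs_of_pos (Real.exp_pos _)]
    rw [habs]
    calc (1/s) * Real.exp (-s * t) * ‖D t‖
        ≤ (1/s) * Real.exp (-s * t) * (c * (1/lam)) :=
          mul_le_mul_of_nonneg_left (hDbound t ht) (by positivity)
      _ = ((1/s) * (c * (1/lam))) * Real.exp (-s * t) := by ring
  have hIBP := integral_Ioi_of_hasDerivAt_of_tendsto'
    (f' := fun t => (-(1/s) * Real.exp (-s * t)) • (E t - onePi) + Real.exp (-s * t) • D t)
    (fun t _ => hh t) (hI4'.add hI3) hhtend
  rw [show (0 : Matrix (Fin N) (Fin N) ℝ) - (-(1/s) * Real.exp (-s * 0)) • D 0 = 0 by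
    simp [hD0]] at hIBP
  rw [MeasureTheory.integral_add hI4' hI3] at hIBP
  -- compute ∫ exp(-st) • (E t - onePi)
  have hIonePi : IntegrableOn (fun t : ℝ => Real.exp (-s * t) • onePi) (Set.Ioi 0) :=
    (exp_neg_integrableOn_Ioi 0 hs).smul_const onePi
  have hIF : (∫ t in Set.Ioi (0:ℝ), Real.exp (-s * t) • (E t - onePi)) =
      R - (1/s) • onePi := by
    have hsplit : (fun t : ℝ => Real.exp (-s * t) • (E t - onePi)) =
        fun t => Real.exp (-s * t) • E t - Real.exp (-s * t) • onePi := by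
      funext t; rw [smul_sub]
    rw [hsplit, MeasureTheory.integral_sub hI1 hIonePi,
      _root_.integral_smul_const, hscalar s hs, hRdef]
  have hIF' : (∫ t in Set.Ioi (0:ℝ), (-(1/s) * Real.exp (-s * t)) • (E t - onePi)) =
      (-(1/s)) • (R - (1/s) • onePi) := by
    have : (fun t : ℝ => (-(1/s) * Real.exp (-s * t)) • (E t - onePi)) =
        fun t => (-(1/s)) • (Real.exp (-s * t) • (E t - onePi)) := by
      funext t; rw [← smul_smul]
    rw [this, MeasureTheory.integral_smul, hIF]
  rw [hIF'] at hIBP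
  have hfinal : (∫ t in Set.Ioi (0:ℝ), Real.exp (-s * t) • D t) =
      (1/s) • (R - (1/s) • onePi) := by
    have h2 : (∫ t in Set.Ioi (0:ℝ), Real.exp (-s * t) • D t) =
        -((-(1/s)) • (R - (1/s) • onePi)) := eq_neg_of_add_eq_zero_right hIBP
    rw [h2, ← neg_smul, neg_neg]
  rw [hfinal, hAinv, smul_sub, smul_smul, show (1/s) * (1/s) = 1/s^2 by ring]
end

section
/- Let A₋₁, A₀, A₁, G, Ĝ, H be n×n real matrices satisfying A₋₁ + A₀G + A₁G² = 0, A₁ + A₀Ĝ + A₋₁Ĝ² = 0, and (A₀ + A₁G + A₋₁Ĝ)H = −I. Let C ≥ 1, let g₀, …, g_C ∈ ℝⁿ, and let v, w ∈ ℝⁿ be arbitrary. For 0 ≤ k ≤ C define ν_k = Σ_{j=0}^{k−1} Gʲ H g_{k−j} + Σ_{j=1}^{C−k} Ĝʲ H g_{k+j} (empty sums being zero) and u_k = Gᵏ v + Ĝ^{C−k} w + ν_k. Then u satisfies the second-order matrix difference equation A₋₁ u_{k−1} + A₀ u_k + A₁ u_{k+1} = −g_k for every k with 1 ≤ k ≤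 C−1. -/
open Matrix Finset

lemma myMulVec_sum {n : ℕ} (M : Matrix (Fin n) (Fin n) ℝ) (s : Finset ℕ)
    (f : ℕ → Fin n → ℝ) : M *ᵥ (∑ i ∈ s, f i) = ∑ i ∈ s, M *ᵥ f i := by
  simp only [← Matrix.mulVecLin_apply, map_sum]

lemma myPow1 {n : ℕ} (M : Matrix (Fin n) (Fin n) ℝ) (x : Fin n → ℝ) (e : ℕ) :
    M ^ (e + 1) *ᵥ x = M *ᵥ (M ^ e *ᵥ x) := by
  rw [Matrix.mulVec_mulVec, ← pow_succ']

lemma myPow2 {n : ℕ} (M : Matrix (Fin n) (Fin n) ℝ) (x : Fin n → ℝ) (e : ℕ) :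
    M ^ (e + 2) *ᵥ x = (M * M) *ᵥ (M ^ e *ᵥ x) := by
  rw [Matrix.mulVec_mulVec, ← pow_two, ← pow_add, add_comm]

lemma S1_rec {n : ℕ} (G H : Matrix (Fin n) (Fin n) ℝ) (g : ℕ → Fin n → ℝ) (k : ℕ) :
    (∑ j ∈ Finset.range (k + 1), (G ^ j * H) *ᵥ g (k + 1 - j)) =
      H *ᵥ g (k + 1) + G *ᵥ (∑ j ∈ Finset.range k, (G ^ j * H) *ᵥ g (k - j)) := by
  rw [Finset.sum_range_succ', myMulVec_sum]
  simp only [Nat.succ_sub_succ, pow_succ', Matrix.mul_assoc, Matrix.mulVec_mulVec, pow_zero,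
    Matrix.one_mul, Nat.sub_zero]
  rw [add_comm]

lemma S2_rec {n : ℕ} (Gh H : Matrix (Fin n) (Fin n) ℝ) (g : ℕ → Fin n → ℝ) (C k : ℕ)
    (hk : k + 1 ≤ C) :
    (∑ j ∈ Finset.Icc 1 (C - k), (Gh ^ j * H) *ᵥ g (k + j)) =
      Gh *ᵥ (H *ᵥ g (k + 1)) +
      Gh *ᵥ (∑ j ∈ Finset.Icc 1 (C - (k + 1)), (Gh ^ j * H) *ᵥ g (k + 1 + j)) := by
  obtain ⟨e, he⟩ : ∃ e, C - k = e + 1 := ⟨C - (k + 1), by omega⟩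
  have he' : C - (k + 1) = e := by omega
  rw [he, he', ← Finset.Ico_add_one_right_eq_Icc, ← Finset.Ico_add_one_right_eq_Icc, Finset.sum_Ico_eq_sum_range,
    Finset.sum_Ico_eq_sum_range]
  have h1 : e + 1 + 1 - 1 = e + 1 := by omega
  have h2 : e + 1 - 1 = e := by omega
  rw [h1, h2, Finset.sum_range_succ', myMulVec_sum]
  simp only [add_zero, pow_one]
  rw [add_comm]
  congr 1
  · rw [Matrix.mulVec_mulVec]
  · apply Finset.sum_congr rfl
    intro i _
    rw [Matrix.mulVec_mulVec, ← Matrix.mul_assoc, ← pow_succ',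
      show 1 + (i + 1) = 1 + i + 1 from by omega,
      show k + (1 + i + 1) = k + 1 + (1 + i) from by omega]

lemma key {n : ℕ} (Am A0 A1 G Gh H : Matrix (Fin n) (Fin n) ℝ)
    (hG : Am + A0 * G + A1 * G ^ 2 = 0)
    (hGh : A1 + A0 * Gh + Am * Gh ^ 2 = 0)
    (hH : (A0 + A1 * G + Am * Gh) * H = -1)
    (p q P Q a b : Fin n → ℝ) :
    Am *ᵥ (p + (Gh * Gh) *ᵥ q + (P + (Gh *ᵥ (H *ᵥ a) + ((Gh * Gh) *ᵥ (H *ᵥ b) + (Gh * Gh) *ᵥ Q))))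
      + A0 *ᵥ (G *ᵥ p + Gh *ᵥ q + ((H *ᵥ a + G *ᵥ P) + (Gh *ᵥ (H *ᵥ b) + Gh *ᵥ Q)))
      + A1 *ᵥ ((G * G) *ᵥ p + q + ((H *ᵥ b + (G *ᵥ (H *ᵥ a) + (G * G) *ᵥ P)) + Q)) = -a := by
  have hG' : Am + A0 * G + A1 * (G * G) = 0 := by rw [← pow_two]; exact hG
  have hGh' : A1 + A0 * Gh + Am * (Gh * Gh) = 0 := by rw [← pow_two]; exact hGh
  have step :
      Am *ᵥ (p + (Gh * Gh) *ᵥ q + (P + (Gh *ᵥ (H *ᵥ a) + ((Gh * Gh) *ᵥ (H *ᵥ b) + (Gh * Gh) *ᵥ Q))))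
        + A0 *ᵥ (G *ᵥ p + Gh *ᵥ q + ((H *ᵥ a + G *ᵥ P) + (Gh *ᵥ (H *ᵥ b) + Gh *ᵥ Q)))
        + A1 *ᵥ ((G * G) *ᵥ p + q + ((H *ᵥ b + (G *ᵥ (H *ᵥ a) + (G * G) *ᵥ P)) + Q)) =
      (Am + A0 * G + A1 * (G * G)) *ᵥ p + (A1 + A0 * Gh + Am * (Gh * Gh)) *ᵥ q
        + (Am + A0 * G + A1 * (G * G)) *ᵥ P + (A1 + A0 * Gh + Am * (Gh * Gh)) *ᵥ Q
        + ((A0 + A1 * G + Am * Gh) * H) *ᵥ a + ((A1 + A0 * Gh + Am * (Gh * Gh)) * H) *ᵥ b := by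
    simp only [Matrix.mulVec_add, Matrix.add_mulVec, Matrix.mulVec_mulVec, Matrix.add_mul,
      Matrix.mul_assoc]
    abel
  rw [step, hG', hGh', hH]
  simp [Matrix.neg_mulVec]

/-- (Lemma 1 of the paper, sufficiency part.) If `G`, `Gh` solve the matrix
quadratic equations `A₋₁ + A₀X + A₁X² = 0` and `A₁ + A₀X + A₋₁X² = 0` and
`(A₀ + A₁G + A₋₁Gh)H = −I`, then for arbitrary `v, w` the vectors
`u_k = Gᵏ v + Gh^{C−k} w + ν_k`, with
`ν_k = Σ_{j=0}^{k−1} Gʲ H g_{k−j} + Σ_{j=1}^{C−k} Ghʲ H g_{k+j}`, satisfy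
`A₋₁ u_{k−1} + A₀ u_k + A₁ u_{k+1} = −g_k` for `1 ≤ k ≤ C−1`.
Here `Am`, `A0`, `A1` denote `A₋₁`, `A₀`, `A₁` and `Gh` denotes the matrix Gh. -/
theorem matrix_difference_equation_general_solution
    (n : ℕ) (Am A0 A1 G Gh H : Matrix (Fin n) (Fin n) ℝ)
    (hG : Am + A0 * G + A1 * G ^ 2 = 0)
    (hGh : A1 + A0 * Gh + Am * Gh ^ 2 = 0)
    (hH : (A0 + A1 * G + Am * Gh) * H = -1)
    (C : ℕ) (hC : 1 ≤ C)
    (g : ℕ → Fin n → ℝ)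
    (v w : Fin n → ℝ)
    (ν : ℕ → Fin n → ℝ)
    (hν : ∀ k, k ≤ C → ν k =
      (∑ j ∈ Finset.range k, (G ^ j * H) *ᵥ g (k - j)) +
      (∑ j ∈ Finset.Icc 1 (C - k), (Gh ^ j * H) *ᵥ g (k + j)))
    (u : ℕ → Fin n → ℝ)
    (hu : ∀ k, k ≤ C → u k = (G ^ k) *ᵥ v + (Gh ^ (C - k)) *ᵥ w + ν k) :
    ∀ k, 1 ≤ k → k ≤ C - 1 →
      Am *ᵥ u (k - 1) + A0 *ᵥ u k + A1 *ᵥ u (k + 1) = -g k := by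
  intro k hk1 hkC
  obtain ⟨m, rfl⟩ : ∃ m, k = m + 1 := ⟨k - 1, by omega⟩
  have hm2 : m + 2 ≤ C := by omega
  simp only [Nat.add_sub_cancel]
  have hCm : C - m = C - (m + 2) + 2 := by omega
  have hCm1 : C - (m + 1) = C - (m + 2) + 1 := by omega
  have hS1a : (∑ j ∈ Finset.range (m + 1), (G ^ j * H) *ᵥ g (m + 1 - j)) =
      H *ᵥ g (m + 1) + G *ᵥ (∑ j ∈ Finset.range m, (G ^ j * H) *ᵥ g (m - j)) := S1_rec G H g m
  have hS1b : (∑ j ∈ Finset.range (m + 2), (G ^ j * H) *ᵥ g (m + 2 - j)) =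
      H *ᵥ g (m + 2) + (G *ᵥ (H *ᵥ g (m + 1)) +
        (G * G) *ᵥ (∑ j ∈ Finset.range m, (G ^ j * H) *ᵥ g (m - j))) := by
    have h := S1_rec G H g (m + 1)
    rw [show m + 1 + 1 = m + 2 from rfl] at h
    rw [h, hS1a]
    simp only [Matrix.mulVec_add, Matrix.mulVec_mulVec]
  have hS2b : (∑ j ∈ Finset.Icc 1 (C - (m + 1)), (Gh ^ j * H) *ᵥ g (m + 1 + j)) =
      Gh *ᵥ (H *ᵥ g (m + 2)) +
        Gh *ᵥ (∑ j ∈ Finset.Icc 1 (C - (m + 2)), (Gh ^ j * H) *ᵥ g (m + 2 + j)) := by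
    have h := S2_rec Gh H g C (m + 1) (by omega)
    rw [show m + 1 + 1 = m + 2 from rfl] at h
    exact h
  have hS2a : (∑ j ∈ Finset.Icc 1 (C - m), (Gh ^ j * H) *ᵥ g (m + j)) =
      Gh *ᵥ (H *ᵥ g (m + 1)) + ((Gh * Gh) *ᵥ (H *ᵥ g (m + 2)) +
        (Gh * Gh) *ᵥ (∑ j ∈ Finset.Icc 1 (C - (m + 2)), (Gh ^ j * H) *ᵥ g (m + 2 + j))) := by
    rw [S2_rec Gh H g C m (by omega), hS2b]
    simp only [Matrix.mulVec_add, Matrix.mulVec_mulVec, Matrix.mul_assoc]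
  have e1 : u m = G ^ m *ᵥ v + (Gh * Gh) *ᵥ (Gh ^ (C - (m + 2)) *ᵥ w) +
      ((∑ j ∈ Finset.range m, (G ^ j * H) *ᵥ g (m - j)) + (Gh *ᵥ (H *ᵥ g (m + 1)) +
        ((Gh * Gh) *ᵥ (H *ᵥ g (m + 2)) +
          (Gh * Gh) *ᵥ (∑ j ∈ Finset.Icc 1 (C - (m + 2)), (Gh ^ j * H) *ᵥ g (m + 2 + j))))) := by
    rw [hu m (by omega), hν m (by omega), hS2a, hCm, myPow2]
  have e2 : u (m + 1) = G *ᵥ (G ^ m *ᵥ v) + Gh *ᵥ (Gh ^ (C - (m + 2)) *ᵥ w) +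
      (((H *ᵥ g (m + 1)) + G *ᵥ (∑ j ∈ Finset.range m, (G ^ j * H) *ᵥ g (m - j))) +
        (Gh *ᵥ (H *ᵥ g (m + 2)) +
          Gh *ᵥ (∑ j ∈ Finset.Icc 1 (C - (m + 2)), (Gh ^ j * H) *ᵥ g (m + 2 + j)))) := by
    rw [hu (m + 1) (by omega), hν (m + 1) (by omega), hS1a, hS2b, hCm1, myPow1 G v m,
      myPow1 Gh w (C - (m + 2))]
  have e3 : u (m + 2) = (G * G) *ᵥ (G ^ m *ᵥ v) + Gh ^ (C - (m + 2)) *ᵥ w +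
      ((H *ᵥ g (m + 2) + (G *ᵥ (H *ᵥ g (m + 1)) +
        (G * G) *ᵥ (∑ j ∈ Finset.range m, (G ^ j * H) *ᵥ g (m - j)))) +
        (∑ j ∈ Finset.Icc 1 (C - (m + 2)), (Gh ^ j * H) *ᵥ g (m + 2 + j))) := by
    rw [hu (m + 2) (by omega), hν (m + 2) (by omega), hS1b, myPow2 G v m]
  rw [show m + 1 + 1 = m + 2 from rfl, e1, e2, e3]
  exact key Am A0 A1 G Gh H hG hGh hH (G ^ m *ᵥ v) (Gh ^ (C - (m + 2)) *ᵥ w)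
    (∑ j ∈ Finset.range m, (G ^ j * H) *ᵥ g (m - j))
    (∑ j ∈ Finset.Icc 1 (C - (m + 2)), (Gh ^ j * H) *ᵥ g (m + 2 + j))
    (g (m + 1)) (g (m + 2))
end

section
/- Let s ∈ ℝ, let B₀, A₋₁, A₀, A₁, C₀ be n×n real matrices, and let G, Ĝ, H be n×n real matrices satisfying A₋₁ + (A₀ − sI)G + A₁G² = 0, A₁ + (A₀ − sI)Ĝ + A₋₁Ĝ² = 0 and (A₀ − sI + A₁G + A₋₁Ĝ)H = −I. Let C ≥ 1 and g₀, …, g_C ∈ ℝⁿ, and set ν_k = Σ_{j=0}^{k−1} Gʲ H g_{k−j} + Σ_{j=1}^{C−k} Ĝʲ H g_{k+j} for 0 ≤ k ≤ C. Let Z(s,C) be the 2n×2n block matrix [[(B₀−sI)+A₁G, ((B₀−sI)Ĝ+A₁)Ĝ^{C−1}], [(A₋₁+(C₀−sI)G)G^{C−1}, A₋₁Ĝ+(C₀−sI)]], and suppose v, w ∈ ℝⁿ satisfy Z(s,C)·[v; w] = −[g₀ + (B₀−sI)ν₀ + A₁ν₁ ; g_C + A₋₁ν_{C−1} + (C₀−sI)ν_C].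 Then the vectors R_k = Gᵏv + Ĝ^{C−k}w + ν_k, for 0 ≤ k ≤ C, satisfy the full system: (B₀−sI)R₀ + A₁R₁ = −g₀; A₋₁R_{k−1} + (A₀−sI)R_k + A₁R_{k+1} = −g_k for 1 ≤ k ≤ C−1; and A₋₁R_{C−1} + (C₀−sI)R_C = −g_C. -/
open Matrix Finset

lemma mulVec_sum' {n : ℕ} (A : Matrix (Fin n) (Fin n) ℝ) (s : Finset ℕ)
    (f : ℕ → Fin n → ℝ) : A *ᵥ (∑ i ∈ s, f i) = ∑ i ∈ s, A *ᵥ f i := by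
  ext j
  simp [Matrix.mulVec, dotProduct, Finset.sum_apply, Finset.mul_sum]
  rw [Finset.sum_comm]

lemma Fs {n : ℕ} (G H : Matrix (Fin n) (Fin n) ℝ) (g : ℕ → Fin n → ℝ) (k : ℕ) :
    ∑ j ∈ range (k+1), (G ^ j * H) *ᵥ g (k+1-j)
      = H *ᵥ g (k+1) + G *ᵥ ∑ j ∈ range k, (G ^ j * H) *ᵥ g (k-j) := by
  rw [Finset.sum_range_succ', mulVec_sum']
  simp only [pow_zero, one_mul, Nat.succ_sub_succ, Nat.sub_zero]
  rw [add_comm]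
  congr 1
  apply Finset.sum_congr rfl
  intro j _
  rw [Matrix.mulVec_mulVec, ← mul_assoc, ← pow_succ']

lemma Bs {n : ℕ} (Gh H : Matrix (Fin n) (Fin n) ℝ) (g : ℕ → Fin n → ℝ) (k m : ℕ) :
    ∑ j ∈ Icc 1 (m+1), (Gh ^ j * H) *ᵥ g (k+j)
      = (Gh * H) *ᵥ g (k+1) + Gh *ᵥ ∑ j ∈ Icc 1 m, (Gh ^ j * H) *ᵥ g (k+1+j) := by
  rw [← Finset.Ico_add_one_right_eq_Icc, ← Finset.Ico_add_one_right_eq_Icc, Finset.sum_Ico_eq_sum_range,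
    Finset.sum_Ico_eq_sum_range]
  simp only [Nat.succ_sub_one, Nat.add_sub_cancel]
  rw [Finset.sum_range_succ', mulVec_sum', add_comm]
  congr 1
  · simp [pow_one]
  · apply Finset.sum_congr rfl
    intro x _
    rw [Matrix.mulVec_mulVec]
    have h1 : 1 + (x + 1) = (1 + x) + 1 := by omega
    have h2 : k + (1 + x + 1) = k + 1 + (1 + x) := by omega
    rw [h1, h2, pow_succ', mul_assoc]


/-- (Proposition 2 of the paper, verification part.) With `G(s)`, `Ĝ(s)`
solving the `s`-shifted quadratic equations and `H = H₀(s)`, if `[v; w]` solves the boundary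
system `Z(s,C)[v; w] = −[g₀ + (B₀−sI)ν₀ + A₁ν₁ ; g_C + A₋₁ν_{C−1} + (C₀−sI)ν_C]`, then
`R_k = G(s)ᵏ v + Ĝ(s)^{C−k} w + ν_k` solves the full block system `(sI − Q)R = g`.
Here `Am`, `A0`, `A1`, `B0`, `C0` denote `A₋₁`, `A₀`, `A₁`, `B₀`, `C₀` and `Gh` denotes Ĝ. -/
theorem laplace_reward_block_solution
    (n : ℕ) (s : ℝ) (B0 Am A0 A1 C0 G Gh H : Matrix (Fin n) (Fin n) ℝ)
    (hG : Am + (A0 - s • 1) * G + A1 * G ^ 2 = 0)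
    (hGh : A1 + (A0 - s • 1) * Gh + Am * Gh ^ 2 = 0)
    (hH : (A0 - s • 1 + A1 * G + Am * Gh) * H = -1)
    (C : ℕ) (hC : 1 ≤ C)
    (g : ℕ → Fin n → ℝ)
    (ν : ℕ → Fin n → ℝ)
    (hν : ∀ k, k ≤ C → ν k =
      (∑ j ∈ Finset.range k, (G ^ j * H) *ᵥ g (k - j)) +
      (∑ j ∈ Finset.Icc 1 (C - k), (Gh ^ j * H) *ᵥ g (k + j)))
    (Z : Matrix (Fin n ⊕ Fin n) (Fin n ⊕ Fin n) ℝ)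
    (hZ : Z = Matrix.fromBlocks
      ((B0 - s • 1) + A1 * G) (((B0 - s • 1) * Gh + A1) * Gh ^ (C - 1))
      ((Am + (C0 - s • 1) * G) * G ^ (C - 1)) (Am * Gh + (C0 - s • 1)))
    (v w : Fin n → ℝ)
    (hvw : Z *ᵥ Sum.elim v w =
      -Sum.elim (g 0 + (B0 - s • 1) *ᵥ ν 0 + A1 *ᵥ ν 1)
                (g C + Am *ᵥ ν (C - 1) + (C0 - s • 1) *ᵥ ν C))
    (R : ℕ → Fin n → ℝ)
    (hR : ∀ k, k ≤ C → R k = (G ^ k) *ᵥ v + (Gh ^ (C - k)) *ᵥ w + ν k) :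
    ((B0 - s • 1) *ᵥ R 0 + A1 *ᵥ R 1 = -g 0) ∧
    (∀ k, 1 ≤ k → k ≤ C - 1 →
      Am *ᵥ R (k - 1) + (A0 - s • 1) *ᵥ R k + A1 *ᵥ R (k + 1) = -g k) ∧
    (Am *ᵥ R (C - 1) + (C0 - s • 1) *ᵥ R C = -g C) := by
  obtain ⟨C', rfl⟩ : ∃ C', C = C' + 1 := ⟨C - 1, by omega⟩
  rw [hZ, Matrix.fromBlocks_mulVec] at hvw
  simp only [Sum.elim_comp_inl, Sum.elim_comp_inr, Nat.add_sub_cancel] at hvw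
  have hl : ((B0 - s • 1) + A1 * G) *ᵥ v + (((B0 - s • 1) * Gh + A1) * Gh ^ C') *ᵥ w
      = -(g 0 + (B0 - s • 1) *ᵥ ν 0 + A1 *ᵥ ν 1) := by
    funext i
    simpa using congrFun hvw (Sum.inl i)
  have hr : ((Am + (C0 - s • 1) * G) * G ^ C') *ᵥ v + (Am * Gh + (C0 - s • 1)) *ᵥ w
      = -(g (C' + 1) + Am *ᵥ ν C' + (C0 - s • 1) *ᵥ ν (C' + 1)) := by
    funext i
    simpa using congrFun hvw (Sum.inr i)
  refine ⟨?_, ?_, ?_⟩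
  · -- boundary at 0
    have step : (B0 - s • 1) *ᵥ R 0 + A1 *ᵥ R 1
        = (((B0 - s • 1) + A1 * G) *ᵥ v + (((B0 - s • 1) * Gh + A1) * Gh ^ C') *ᵥ w)
          + ((B0 - s • 1) *ᵥ ν 0 + A1 *ᵥ ν 1) := by
      rw [hR 0 (by omega), hR 1 (by omega)]
      simp only [Nat.sub_zero, Nat.add_sub_cancel, pow_zero, pow_one,
        Matrix.mulVec_add, Matrix.add_mulVec, Matrix.mulVec_mulVec, Matrix.one_mulVec,
        pow_succ', add_mul, mul_assoc, mul_one]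
      abel
    rw [step, hl]; abel
  · -- interior
    intro k hk1 hk2
    obtain ⟨k', rfl⟩ : ∃ k', k = k' + 1 := ⟨k - 1, by omega⟩
    obtain ⟨d, rfl⟩ : ∃ d, C' = k' + 1 + d := ⟨C' - (k' + 1), by omega⟩
    have s0 : k' + 1 + d + 1 - k' = d + 1 + 1 := by omega
    have s1 : k' + 1 + d + 1 - (k' + 1) = d + 1 := by omega
    have s2 : k' + 1 + d + 1 - (k' + 1 + 1) = d := by omega
    have hn0 := hν k' (by omega)
    rw [s0, Bs Gh H g k' (d + 1), Bs Gh H g (k' + 1) d] at hn0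
    have hn1 := hν (k' + 1) (by omega)
    rw [s1, Fs G H g k', Bs Gh H g (k' + 1) d] at hn1
    have hn2 := hν (k' + 1 + 1) (by omega)
    rw [s2, Fs G H g (k' + 1), Fs G H g k'] at hn2
    have hRk0 := hR k' (by omega); rw [s0] at hRk0
    have hRk1 := hR (k' + 1) (by omega); rw [s1] at hRk1
    have hRk2 := hR (k' + 1 + 1) (by omega); rw [s2] at hRk2
    have c1 : Am * G ^ k' + (A0 - s • 1) * (G * G ^ k') + A1 * (G * (G * G ^ k')) = 0 := by
      calc Am * G ^ k' + (A0 - s • 1) * (G * G ^ k') + A1 * (G * (G * G ^ k'))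
          = (Am + (A0 - s • 1) * G + A1 * G ^ 2) * G ^ k' := by
            simp only [add_mul, mul_assoc, pow_two]
        _ = 0 := by rw [hG, zero_mul]
    have c2 : Am * (Gh * (Gh * Gh ^ d)) + (A0 - s • 1) * (Gh * Gh ^ d) + A1 * Gh ^ d = 0 := by
      calc Am * (Gh * (Gh * Gh ^ d)) + (A0 - s • 1) * (Gh * Gh ^ d) + A1 * Gh ^ d
          = (A1 + (A0 - s • 1) * Gh + Am * Gh ^ 2) * Gh ^ d := by
            simp only [add_mul, mul_assoc, pow_two]; abel
        _ = 0 := by rw [hGh, zero_mul]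
    have c3 : Am + (A0 - s • 1) * G + A1 * (G * G) = 0 := by
      rw [show G * G = G ^ 2 from (pow_two G).symm]; exact hG
    have c4 : Am * (Gh * Gh) + (A0 - s • 1) * Gh + A1 = 0 := by
      rw [show Gh * Gh = Gh ^ 2 from (pow_two Gh).symm]
      rw [← hGh]; abel
    have c5 : Am * (Gh * H) + (A0 - s • 1) * H + A1 * (G * H) = -1 := by
      calc Am * (Gh * H) + (A0 - s • 1) * H + A1 * (G * H)
          = (A0 - s • 1 + A1 * G + Am * Gh) * H := by
            simp only [add_mul, mul_assoc]; abel
        _ = -1 := hH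
    have c6 : Am * (Gh * (Gh * H)) + (A0 - s • 1) * (Gh * H) + A1 * H = 0 := by
      calc Am * (Gh * (Gh * H)) + (A0 - s • 1) * (Gh * H) + A1 * H
          = (A1 + (A0 - s • 1) * Gh + Am * Gh ^ 2) * H := by
            simp only [add_mul, mul_assoc, pow_two]; abel
        _ = 0 := by rw [hGh, zero_mul]
    have step : Am *ᵥ R (k' + 1 - 1) + (A0 - s • 1) *ᵥ R (k' + 1) + A1 *ᵥ R (k' + 1 + 1)
        = (Am * G ^ k' + (A0 - s • 1) * (G * G ^ k') + A1 * (G * (G * G ^ k'))) *ᵥ v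
          + (Am * (Gh * (Gh * Gh ^ d)) + (A0 - s • 1) * (Gh * Gh ^ d) + A1 * Gh ^ d) *ᵥ w
          + (Am + (A0 - s • 1) * G + A1 * (G * G)) *ᵥ
              (∑ j ∈ Finset.range k', (G ^ j * H) *ᵥ g (k' - j))
          + (Am * (Gh * Gh) + (A0 - s • 1) * Gh + A1) *ᵥ
              (∑ j ∈ Finset.Icc 1 d, (Gh ^ j * H) *ᵥ g (k' + 1 + 1 + j))
          + (Am * (Gh * H) + (A0 - s • 1) * H + A1 * (G * H)) *ᵥ g (k' + 1)
          + (Am * (Gh * (Gh * H)) + (A0 - s • 1) * (Gh * H) + A1 * H) *ᵥ g (k' + 1 + 1) := by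
      simp only [Nat.add_sub_cancel]
      rw [hRk0, hRk1, hRk2, hn0, hn1, hn2]
      simp only [Matrix.mulVec_add, Matrix.add_mulVec, Matrix.mulVec_mulVec,
        pow_succ', add_mul, mul_assoc, mul_one]
      abel
    rw [step, c1, c2, c3, c4, c5, c6]
    simp [Matrix.neg_mulVec]
  · -- boundary at C
    have step : Am *ᵥ R (C' + 1 - 1) + (C0 - s • 1) *ᵥ R (C' + 1)
        = (((Am + (C0 - s • 1) * G) * G ^ C') *ᵥ v + (Am * Gh + (C0 - s • 1)) *ᵥ w)
          + (Am *ᵥ ν C' + (C0 - s • 1) *ᵥ ν (C' + 1)) := by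
      simp only [Nat.add_sub_cancel]
      rw [hR C' (by omega), hR (C' + 1) le_rfl]
      have e1 : C' + 1 - C' = 1 := by omega
      rw [e1, Nat.sub_self]
      simp only [pow_zero, pow_one, Matrix.one_mulVec, Matrix.mulVec_add,
        Matrix.add_mulVec, Matrix.mulVec_mulVec, pow_succ', add_mul, mul_assoc, mul_one]
      abel
    rw [step, hr]; abel
end

section
/- Let s ∈ ℝ, C ≥ 2, and let B₀, A₋₁, A₀, A₁, C₀, G, Ĝ be n×n real matrices with A₋₁ + (A₀ − sI)G + A₁G² = 0 and A₁ + (A₀ − sI)Ĝ + A₋₁Ĝ² = 0. Let 𝒞(s) be the (C−1)n×(C−1)n block tridiagonal matrix with diagonal blocks A₀ − sI, superdiagonal blocks A₁ and subdiagonal blocks A₋₁, and assume 𝒞(s) is invertible. Let 𝒜(s) = diag(B₀ − sI, C₀ − sI) (a 2n×2n block diagonal matrix), let ℬ be the 2n×(C−1)n matrix whose first block row is [A₁, 0, …, 0] and second block row is [0, …, 0, A₋₁], and let 𝒟 be the (C−1)n×2n matrix whose first block row is [A₋₁, 0], last block row is [0, A₁], and all other blocks zero. Then the 2n×2n matrix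 Z(s,C) = [[(B₀−sI)+A₁G, ((B₀−sI)Ĝ+A₁)Ĝ^{C−1}], [(A₋₁+(C₀−sI)G)G^{C−1}, A₋₁Ĝ+(C₀−sI)]] factorizes as Z(s,C) = (𝒜(s) + ℬ(−𝒞(s))^{−1}𝒟) · [[I, Ĝ^C], [G^C, I]]. -/
open Matrix

lemma tri_split {n N : ℕ} (k l : Fin N) (P Q R : Matrix (Fin n) (Fin n) ℝ)
    (W : ℕ → Matrix (Fin n) (Fin n) ℝ) :
    (if k = l then P else if (l : ℕ) = (k : ℕ) + 1 then Q
      else if (k : ℕ) = (l : ℕ) + 1 then R else 0) * W (l : ℕ)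
    = (if k = l then P * W (l : ℕ) else 0)
      + (if (l : ℕ) = (k : ℕ) + 1 then Q * W (l : ℕ) else 0)
      + (if (k : ℕ) = (l : ℕ) + 1 then R * W (l : ℕ) else 0) := by
  by_cases h1 : k = l
  · subst h1
    have h2 : ¬((k : ℕ) = (k : ℕ) + 1) := by omega
    simp [h2]
  · rw [if_neg h1, if_neg h1]
    by_cases h2 : (l : ℕ) = (k : ℕ) + 1
    · have h3 : ¬((k : ℕ) = (l : ℕ) + 1) := by omega
      simp [h2, h3]
      intro h
      exact absurd h (by omega)
    · rw [if_neg h2, if_neg h2]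
      by_cases h3 : (k : ℕ) = (l : ℕ) + 1 <;> simp [h3]

lemma tri_sum {n N : ℕ} (k : Fin N) (P Q R : Matrix (Fin n) (Fin n) ℝ)
    (W : ℕ → Matrix (Fin n) (Fin n) ℝ) :
    ∑ l : Fin N, (if k = l then P else if (l : ℕ) = (k : ℕ) + 1 then Q
      else if (k : ℕ) = (l : ℕ) + 1 then R else 0) * W (l : ℕ)
    = P * W (k : ℕ) + (if (k : ℕ) + 1 < N then Q * W ((k : ℕ) + 1) else 0)
      + (if (k : ℕ) = 0 then 0 else R * W ((k : ℕ) - 1)) := by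
  rw [Finset.sum_congr rfl (fun l _ => tri_split k l P Q R W)]
  rw [Finset.sum_add_distrib, Finset.sum_add_distrib]
  congr 1
  · congr 1
    · rw [Finset.sum_ite_eq]; simp
    · by_cases hk : (k : ℕ) + 1 < N
      · rw [if_pos hk, Finset.sum_eq_single (⟨(k : ℕ) + 1, hk⟩ : Fin N)]
        · simp
        · intro b _ hb
          rw [if_neg]
          simp [Fin.ext_iff] at hb; omega
        · simp
      · rw [if_neg hk]
        apply Finset.sum_eq_zero
        intro l _
        rw [if_neg]
        have := l.isLt; omega
  · by_cases hk : (k : ℕ) = 0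
    · rw [if_pos hk]
      apply Finset.sum_eq_zero
      intro l _
      rw [if_neg]; omega
    · rw [if_neg hk, Finset.sum_eq_single (⟨(k : ℕ) - 1, by have := k.isLt; omega⟩ : Fin N)]
      · simp; omega
      · intro b _ hb
        rw [if_neg]
        simp [Fin.ext_iff] at hb; omega
      · simp

lemma pick_sum {n N : ℕ} (c : ℕ) (hc : c < N) (A : Matrix (Fin n) (Fin n) ℝ)
    (W : ℕ → Matrix (Fin n) (Fin n) ℝ) :
    ∑ l : Fin N, (if (l : ℕ) = c then A else 0) * W (l : ℕ) = A * W c := by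
  rw [Finset.sum_eq_single (⟨c, hc⟩ : Fin N)]
  · simp
  · intro b _ hb
    rw [if_neg, zero_mul]
    simp [Fin.ext_iff] at hb; omega
  · simp

lemma quad_shift {n : ℕ} (X P Q R : Matrix (Fin n) (Fin n) ℝ)
    (h : R + Q * X + P * X ^ 2 = 0) (k : ℕ) :
    R * X ^ k + Q * X ^ (k + 1) + P * X ^ (k + 2) = 0 := by
  have h2 : (R + Q * X + P * X ^ 2) * X ^ k = 0 := by rw [h, zero_mul]
  calc R * X ^ k + Q * X ^ (k + 1) + P * X ^ (k + 2)
      = (R + Q * X + P * X ^ 2) * X ^ k := by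
        rw [add_mul, add_mul, mul_assoc, mul_assoc, ← pow_succ', ← pow_add,
          Nat.add_comm 2 k]
    _ = 0 := h2

lemma left_col {n : ℕ} (C : ℕ) (hC : 2 ≤ C) (Am A0s A1 G : Matrix (Fin n) (Fin n) ℝ)
    (hG : Am + A0s * G + A1 * G ^ 2 = 0) (k : ℕ) (hk : k < C - 1) :
    A0s * G ^ (k + 1) + (if k + 1 < C - 1 then A1 * G ^ (k + 1 + 1) else 0)
      + (if k = 0 then 0 else Am * G ^ (k - 1 + 1))
    = -((if k = 0 then Am else 0) * 1 + (if k = C - 2 then A1 else 0) * G ^ C) := by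
  have key := quad_shift G A1 A0s Am hG
  by_cases h0 : k = 0 <;> by_cases h2 : k = C - 2
  · have hC2 : C = 2 := by omega
    subst h0; subst hC2
    simp only [show ¬(0 + 1 < 2 - 1) by omega, if_neg, if_pos rfl, mul_one, add_zero]
    have k0 := key 0
    simp only [pow_zero, mul_one, zero_add] at k0
    linear_combination (norm := (noncomm_ring; abel)) k0
  · subst h0
    have hlt : 0 + 1 < C - 1 := by omega
    simp only [if_pos hlt, if_pos rfl, if_neg h2, add_zero, zero_mul, mul_one]
    have k0 := key 0
    simp only [pow_zero, mul_one, zero_add] at k0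
    linear_combination (norm := (noncomm_ring; abel)) k0
  · obtain ⟨m, rfl⟩ : ∃ m, k = m + 1 := ⟨k - 1, by omega⟩
    have hlt : ¬(m + 1 + 1 < C - 1) := by omega
    simp only [if_neg hlt, if_neg h0, if_pos h2, zero_mul, zero_add, add_zero]
    rw [show m + 1 - 1 + 1 = m + 1 by omega, show C = m + 3 by omega]
    linear_combination (norm := noncomm_ring) key (m + 1)
  · obtain ⟨m, rfl⟩ : ∃ m, k = m + 1 := ⟨k - 1, by omega⟩
    have hlt : m + 1 + 1 < C - 1 := by omega
    simp only [if_pos hlt, if_neg h0, if_neg h2, zero_mul, zero_add, add_zero, neg_zero]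
    rw [show m + 1 - 1 + 1 = m + 1 by omega]
    linear_combination (norm := noncomm_ring) key (m + 1)

lemma right_col {n : ℕ} (C : ℕ) (hC : 2 ≤ C) (Am A0s A1 Gh : Matrix (Fin n) (Fin n) ℝ)
    (hGh : A1 + A0s * Gh + Am * Gh ^ 2 = 0) (k : ℕ) (hk : k < C - 1) :
    A0s * Gh ^ (C - 1 - k) + (if k + 1 < C - 1 then A1 * Gh ^ (C - 1 - (k + 1)) else 0)
      + (if k = 0 then 0 else Am * Gh ^ (C - 1 - (k - 1)))
    = -((if k = 0 then Am else 0) * Gh ^ C + (if k = C - 2 then A1 else 0) * 1) := by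
  have key := quad_shift Gh Am A0s A1 hGh
  by_cases h0 : k = 0 <;> by_cases h2 : k = C - 2
  · have hC2 : C = 2 := by omega
    subst h0; subst hC2
    simp only [show ¬(0 + 1 < 2 - 1) by omega, if_neg, if_pos rfl, mul_one, add_zero,
      show (2:ℕ) - 1 - 0 = 0 + 1 by omega]
    have k0 := key 0
    simp only [pow_zero, mul_one, zero_add] at k0
    linear_combination (norm := (noncomm_ring; abel)) k0
  · subst h0
    have hlt : 0 + 1 < C - 1 := by omega
    simp only [if_pos hlt, if_pos rfl, if_neg h2, add_zero, zero_mul, mul_one]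
    rw [show C - 1 - 0 = C - 2 + 1 by omega, show C - 1 - (0 + 1) = C - 2 by omega,
      show C = C - 2 + 2 by omega]
    linear_combination (norm := (noncomm_ring; abel)) key (C - 2)
  · have hlt : ¬(k + 1 < C - 1) := by omega
    simp only [if_neg hlt, if_neg h0, if_pos h2, zero_mul, zero_add, add_zero, mul_one]
    rw [show C - 1 - k = 0 + 1 by omega, show C - 1 - (k - 1) = 0 + 2 by omega]
    have k0 := key 0
    simp only [pow_zero, mul_one, zero_add] at k0
    linear_combination (norm := noncomm_ring) k0
  · have hlt : k + 1 < C - 1 := by omega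
    simp only [if_pos hlt, if_neg h0, if_neg h2, zero_mul, zero_add, add_zero, neg_zero]
    rw [show C - 1 - k = C - 2 - k + 1 by omega,
      show C - 1 - (k + 1) = C - 2 - k by omega,
      show C - 1 - (k - 1) = C - 2 - k + 2 by omega]
    linear_combination (norm := noncomm_ring) key (C - 2 - k)

lemma ite_entry {n : ℕ} (c : Prop) [Decidable c] (A : Matrix (Fin n) (Fin n) ℝ)
    (i m : Fin n) :
    (if c then A i m else 0) = (if c then A else 0) i m := by
  split_ifs <;> simp

/-- The solution block column `V` with blocks `[G^(k+1), Ĝ^(C-1-k)]`. -/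
def Vmat (n C : ℕ) (G Gh : Matrix (Fin n) (Fin n) ℝ) :
    Matrix (Fin (C - 1) × Fin n) (Fin n ⊕ Fin n) ℝ :=
  Matrix.of fun p => Sum.elim (fun j => (G ^ ((p.1 : ℕ) + 1)) p.2 j)
    (fun j => (Gh ^ (C - 1 - (p.1 : ℕ))) p.2 j)

@[simp] lemma Vmat_inl {n C : ℕ} (G Gh : Matrix (Fin n) (Fin n) ℝ)
    (p : Fin (C - 1) × Fin n) (j : Fin n) :
    Vmat n C G Gh p (Sum.inl j) = (G ^ ((p.1 : ℕ) + 1)) p.2 j := rfl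

@[simp] lemma Vmat_inr {n C : ℕ} (G Gh : Matrix (Fin n) (Fin n) ℝ)
    (p : Fin (C - 1) × Fin n) (j : Fin n) :
    Vmat n C G Gh p (Sum.inr j) = (Gh ^ (C - 1 - (p.1 : ℕ))) p.2 j := rfl

/-- (Factorization of `Z(s,C)` in Proposition 2 of the paper.)
`Z(s,C) = (𝒜(s) + ℬ(−𝒞(s))⁻¹𝒟) · [[I, Ĝ^C], [G^C, I]]`, where `𝒞(s)` is the interior block
tridiagonal part, `𝒜(s) = diag(B₀−sI, C₀−sI)`, and `ℬ`, `𝒟` are the indicated block rows and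
columns. Here `Am`, `A0`, `A1`, `B0`, `C0` denote `A₋₁`, `A₀`, `A₁`, `B₀`, `C₀`, `Gh` denotes
Ĝ, and `cA`, `cB`, `cC`, `cD` denote `𝒜(s)`, `ℬ`, `𝒞(s)`, `𝒟`. -/
theorem Z_factorization_censored_generator
    (n : ℕ) (s : ℝ) (C : ℕ) (hC : 2 ≤ C)
    (B0 Am A0 A1 C0 G Gh : Matrix (Fin n) (Fin n) ℝ)
    (hG : Am + (A0 - s • 1) * G + A1 * G ^ 2 = 0)
    (hGh : A1 + (A0 - s • 1) * Gh + Am * Gh ^ 2 = 0)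
    (cC : Matrix (Fin (C - 1) × Fin n) (Fin (C - 1) × Fin n) ℝ)
    (hcC : ∀ p q : Fin (C - 1) × Fin n, cC p q =
      if p.1 = q.1 then (A0 - s • 1) p.2 q.2
      else if (q.1 : ℕ) = (p.1 : ℕ) + 1 then A1 p.2 q.2
      else if (p.1 : ℕ) = (q.1 : ℕ) + 1 then Am p.2 q.2
      else 0)
    (hcCinv : IsUnit cC)
    (cA : Matrix (Fin n ⊕ Fin n) (Fin n ⊕ Fin n) ℝ)
    (hcA : cA = Matrix.fromBlocks (B0 - s • 1) 0 0 (C0 - s • 1))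
    (cB : Matrix (Fin n ⊕ Fin n) (Fin (C - 1) × Fin n) ℝ)
    (hcB1 : ∀ (i : Fin n) (q : Fin (C - 1) × Fin n),
      cB (Sum.inl i) q = if (q.1 : ℕ) = 0 then A1 i q.2 else 0)
    (hcB2 : ∀ (i : Fin n) (q : Fin (C - 1) × Fin n),
      cB (Sum.inr i) q = if (q.1 : ℕ) = C - 2 then Am i q.2 else 0)
    (cD : Matrix (Fin (C - 1) × Fin n) (Fin n ⊕ Fin n) ℝ)
    (hcD1 : ∀ (p : Fin (C - 1) × Fin n) (j : Fin n),
      cD p (Sum.inl j) = if (p.1 : ℕ) = 0 then Am p.2 j else 0)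
    (hcD2 : ∀ (p : Fin (C - 1) × Fin n) (j : Fin n),
      cD p (Sum.inr j) = if (p.1 : ℕ) = C - 2 then A1 p.2 j else 0)
    (Z : Matrix (Fin n ⊕ Fin n) (Fin n ⊕ Fin n) ℝ)
    (hZ : Z = Matrix.fromBlocks
      ((B0 - s • 1) + A1 * G) (((B0 - s • 1) * Gh + A1) * Gh ^ (C - 1))
      ((Am + (C0 - s • 1) * G) * G ^ (C - 1)) (Am * Gh + (C0 - s • 1))) :
    Z = (cA + cB * (-cC)⁻¹ * cD) * Matrix.fromBlocks 1 (Gh ^ C) (G ^ C) 1 := by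
  set M : Matrix (Fin n ⊕ Fin n) (Fin n ⊕ Fin n) ℝ :=
    Matrix.fromBlocks 1 (Gh ^ C) (G ^ C) 1 with hM
  -- entries of cD * M
  have hDMl : ∀ (k : Fin (C - 1)) (i j : Fin n), (cD * M) (k, i) (Sum.inl j) =
      (((if (k : ℕ) = 0 then Am else 0) * 1
        + (if (k : ℕ) = C - 2 then A1 else 0) * G ^ C : Matrix (Fin n) (Fin n) ℝ)) i j := by
    intro k i j
    rw [Matrix.mul_apply, Fintype.sum_sum_type, Matrix.add_apply,
      Matrix.mul_apply, Matrix.mul_apply]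
    refine congrArg₂ (· + ·) ?_ ?_ <;> refine Finset.sum_congr rfl fun m _ => ?_
    · rw [hcD1, ite_entry]
      simp [hM]
    · rw [hcD2, ite_entry]
      simp [hM]
  have hDMr : ∀ (k : Fin (C - 1)) (i j : Fin n), (cD * M) (k, i) (Sum.inr j) =
      (((if (k : ℕ) = 0 then Am else 0) * Gh ^ C
        + (if (k : ℕ) = C - 2 then A1 else 0) * 1 : Matrix (Fin n) (Fin n) ℝ)) i j := by
    intro k i j
    rw [Matrix.mul_apply, Fintype.sum_sum_type, Matrix.add_apply,
      Matrix.mul_apply, Matrix.mul_apply]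
    refine congrArg₂ (· + ·) ?_ ?_ <;> refine Finset.sum_congr rfl fun m _ => ?_
    · rw [hcD1, ite_entry]
      simp [hM]
    · rw [hcD2, ite_entry]
      simp [hM]
  -- the key linear system : cC * V = -(cD * M)
  have hMain : cC * Vmat n C G Gh = -(cD * M) := by
    ext p c
    obtain ⟨k, i⟩ := p
    have hcoef : ∀ (l : Fin (C - 1)) (m : Fin n), cC (k, i) (l, m) =
        (if k = l then A0 - s • 1 else if (l : ℕ) = (k : ℕ) + 1 then A1
          else if (k : ℕ) = (l : ℕ) + 1 then Am else 0) i m := by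
      intro l m
      rw [hcC]
      split_ifs <;> simp
    cases c with
    | inl j =>
      have ts := tri_sum k (A0 - s • 1) A1 Am (fun t => G ^ (t + 1))
      calc (cC * Vmat n C G Gh) (k, i) (Sum.inl j)
          = ∑ l : Fin (C - 1), ∑ m, cC (k, i) (l, m) * Vmat n C G Gh (l, m) (Sum.inl j) := by
            rw [Matrix.mul_apply, Fintype.sum_prod_type]
        _ = ∑ l : Fin (C - 1), ((if k = l then A0 - s • 1
              else if (l : ℕ) = (k : ℕ) + 1 then A1
              else if (k : ℕ) = (l : ℕ) + 1 then Am else 0) * G ^ ((l : ℕ) + 1)) i j := by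
            refine Finset.sum_congr rfl fun l _ => ?_
            rw [Matrix.mul_apply]
            refine Finset.sum_congr rfl fun m _ => ?_
            rw [hcoef, Vmat_inl]
        _ = (∑ l : Fin (C - 1), (if k = l then A0 - s • 1
              else if (l : ℕ) = (k : ℕ) + 1 then A1
              else if (k : ℕ) = (l : ℕ) + 1 then Am else 0) * G ^ ((l : ℕ) + 1)) i j := by
            rw [Matrix.sum_apply]
        _ = ((A0 - s • 1) * G ^ ((k : ℕ) + 1)
              + (if (k : ℕ) + 1 < C - 1 then A1 * G ^ ((k : ℕ) + 1 + 1) else 0)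
              + (if (k : ℕ) = 0 then 0 else Am * G ^ ((k : ℕ) - 1 + 1))) i j := by
            rw [ts]
        _ = ((-((if (k : ℕ) = 0 then Am else 0) * 1
              + (if (k : ℕ) = C - 2 then A1 else 0) * G ^ C) : Matrix (Fin n) (Fin n) ℝ)) i j := by
            rw [left_col C hC Am (A0 - s • 1) A1 G hG (k : ℕ) k.isLt]
        _ = (-(cD * M)) (k, i) (Sum.inl j) := by
            rw [Matrix.neg_apply, Matrix.neg_apply, hDMl]
    | inr j =>
      have ts := tri_sum k (A0 - s • 1) A1 Am (fun t => Gh ^ (C - 1 - t))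
      calc (cC * Vmat n C G Gh) (k, i) (Sum.inr j)
          = ∑ l : Fin (C - 1), ∑ m, cC (k, i) (l, m) * Vmat n C G Gh (l, m) (Sum.inr j) := by
            rw [Matrix.mul_apply, Fintype.sum_prod_type]
        _ = ∑ l : Fin (C - 1), ((if k = l then A0 - s • 1
              else if (l : ℕ) = (k : ℕ) + 1 then A1
              else if (k : ℕ) = (l : ℕ) + 1 then Am else 0) * Gh ^ (C - 1 - (l : ℕ))) i j := by
            refine Finset.sum_congr rfl fun l _ => ?_
            rw [Matrix.mul_apply]
            refine Finset.sum_congr rfl fun m _ => ?_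
            rw [hcoef, Vmat_inr]
        _ = (∑ l : Fin (C - 1), (if k = l then A0 - s • 1
              else if (l : ℕ) = (k : ℕ) + 1 then A1
              else if (k : ℕ) = (l : ℕ) + 1 then Am else 0) * Gh ^ (C - 1 - (l : ℕ))) i j := by
            rw [Matrix.sum_apply]
        _ = ((A0 - s • 1) * Gh ^ (C - 1 - (k : ℕ))
              + (if (k : ℕ) + 1 < C - 1 then A1 * Gh ^ (C - 1 - ((k : ℕ) + 1)) else 0)
              + (if (k : ℕ) = 0 then 0 else Am * Gh ^ (C - 1 - ((k : ℕ) - 1)))) i j := by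
            rw [ts]
        _ = ((-((if (k : ℕ) = 0 then Am else 0) * Gh ^ C
              + (if (k : ℕ) = C - 2 then A1 else 0) * 1) : Matrix (Fin n) (Fin n) ℝ)) i j := by
            rw [right_col C hC Am (A0 - s • 1) A1 Gh hGh (k : ℕ) k.isLt]
        _ = (-(cD * M)) (k, i) (Sum.inr j) := by
            rw [Matrix.neg_apply, Matrix.neg_apply, hDMr]
  -- solve for V
  have hUnitDet : IsUnit (-cC).det := by
    have h1 : IsUnit (-cC) := hcCinv.neg
    rwa [Matrix.isUnit_iff_isUnit_det] at h1
  have hVsolve : Vmat n C G Gh = (-cC)⁻¹ * (cD * M) := by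
    have h2 : (-cC) * Vmat n C G Gh = cD * M := by
      rw [Matrix.neg_mul, hMain, neg_neg]
    rw [← h2, ← Matrix.mul_assoc, Matrix.nonsing_inv_mul _ hUnitDet, Matrix.one_mul]
  -- compute cB * V
  have hBV : cB * Vmat n C G Gh =
      Matrix.fromBlocks (A1 * G) (A1 * Gh ^ (C - 1)) (Am * G ^ (C - 1)) (Am * Gh) := by
    have h0lt : 0 < C - 1 := by omega
    have h2lt : C - 2 < C - 1 := by omega
    ext c d
    cases c with
    | inl i =>
      cases d with
      | inl j =>
        calc (cB * Vmat n C G Gh) (Sum.inl i) (Sum.inl j)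
            = ∑ l : Fin (C - 1), ∑ m, cB (Sum.inl i) (l, m)
                * Vmat n C G Gh (l, m) (Sum.inl j) := by
              rw [Matrix.mul_apply, Fintype.sum_prod_type]
          _ = (∑ l : Fin (C - 1), (if (l : ℕ) = 0 then A1 else 0) * G ^ ((l : ℕ) + 1)) i j := by
              rw [Matrix.sum_apply]
              refine Finset.sum_congr rfl fun l _ => ?_
              rw [Matrix.mul_apply]
              refine Finset.sum_congr rfl fun m _ => ?_
              rw [hcB1, ite_entry, Vmat_inl]
          _ = (A1 * G ^ (0 + 1)) i j := by
              rw [pick_sum 0 h0lt A1 (fun t => G ^ (t + 1))]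
          _ = Matrix.fromBlocks (A1 * G) (A1 * Gh ^ (C - 1)) (Am * G ^ (C - 1)) (Am * Gh)
                (Sum.inl i) (Sum.inl j) := by
              simp
      | inr j =>
        calc (cB * Vmat n C G Gh) (Sum.inl i) (Sum.inr j)
            = ∑ l : Fin (C - 1), ∑ m, cB (Sum.inl i) (l, m)
                * Vmat n C G Gh (l, m) (Sum.inr j) := by
              rw [Matrix.mul_apply, Fintype.sum_prod_type]
          _ = (∑ l : Fin (C - 1), (if (l : ℕ) = 0 then A1 else 0) * Gh ^ (C - 1 - (l : ℕ))) i j := by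
              rw [Matrix.sum_apply]
              refine Finset.sum_congr rfl fun l _ => ?_
              rw [Matrix.mul_apply]
              refine Finset.sum_congr rfl fun m _ => ?_
              rw [hcB1, ite_entry, Vmat_inr]
          _ = (A1 * Gh ^ (C - 1 - 0)) i j := by
              rw [pick_sum 0 h0lt A1 (fun t => Gh ^ (C - 1 - t))]
          _ = Matrix.fromBlocks (A1 * G) (A1 * Gh ^ (C - 1)) (Am * G ^ (C - 1)) (Am * Gh)
                (Sum.inl i) (Sum.inr j) := by
              simp
    | inr i =>
      cases d with
      | inl j =>
        calc (cB * Vmat n C G Gh) (Sum.inr i) (Sum.inl j)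
            = ∑ l : Fin (C - 1), ∑ m, cB (Sum.inr i) (l, m)
                * Vmat n C G Gh (l, m) (Sum.inl j) := by
              rw [Matrix.mul_apply, Fintype.sum_prod_type]
          _ = (∑ l : Fin (C - 1), (if (l : ℕ) = C - 2 then Am else 0) * G ^ ((l : ℕ) + 1)) i j := by
              rw [Matrix.sum_apply]
              refine Finset.sum_congr rfl fun l _ => ?_
              rw [Matrix.mul_apply]
              refine Finset.sum_congr rfl fun m _ => ?_
              rw [hcB2, ite_entry, Vmat_inl]
          _ = (Am * G ^ (C - 2 + 1)) i j := by
              rw [pick_sum (C - 2) h2lt Am (fun t => G ^ (t + 1))]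
          _ = Matrix.fromBlocks (A1 * G) (A1 * Gh ^ (C - 1)) (Am * G ^ (C - 1)) (Am * Gh)
                (Sum.inr i) (Sum.inl j) := by
              rw [show C - 2 + 1 = C - 1 by omega]
              simp
      | inr j =>
        calc (cB * Vmat n C G Gh) (Sum.inr i) (Sum.inr j)
            = ∑ l : Fin (C - 1), ∑ m, cB (Sum.inr i) (l, m)
                * Vmat n C G Gh (l, m) (Sum.inr j) := by
              rw [Matrix.mul_apply, Fintype.sum_prod_type]
          _ = (∑ l : Fin (C - 1), (if (l : ℕ) = C - 2 then Am else 0)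
                * Gh ^ (C - 1 - (l : ℕ))) i j := by
              rw [Matrix.sum_apply]
              refine Finset.sum_congr rfl fun l _ => ?_
              rw [Matrix.mul_apply]
              refine Finset.sum_congr rfl fun m _ => ?_
              rw [hcB2, ite_entry, Vmat_inr]
          _ = (Am * Gh ^ (C - 1 - (C - 2))) i j := by
              rw [pick_sum (C - 2) h2lt Am (fun t => Gh ^ (C - 1 - t))]
          _ = Matrix.fromBlocks (A1 * G) (A1 * Gh ^ (C - 1)) (Am * G ^ (C - 1)) (Am * Gh)
                (Sum.inr i) (Sum.inr j) := by
              rw [show C - 1 - (C - 2) = 1 by omega]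
              simp
  -- assemble
  have hGC : G * G ^ (C - 1) = G ^ C := by
    rw [← pow_succ', Nat.sub_add_cancel (by omega)]
  have hGhC : Gh * Gh ^ (C - 1) = Gh ^ C := by
    rw [← pow_succ', Nat.sub_add_cancel (by omega)]
  have hTL : (B0 - s • 1) + A1 * G = (B0 - s • 1) * 1 + 0 * G ^ C + A1 * G := by
    simp
  have hTR : ((B0 - s • 1) * Gh + A1) * Gh ^ (C - 1)
      = (B0 - s • 1) * Gh ^ C + 0 * 1 + A1 * Gh ^ (C - 1) := by
    rw [Matrix.add_mul, Matrix.mul_assoc, hGhC]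
    simp
  have hBL : (Am + (C0 - s • 1) * G) * G ^ (C - 1)
      = 0 * 1 + (C0 - s • 1) * G ^ C + Am * G ^ (C - 1) := by
    rw [Matrix.add_mul, Matrix.mul_assoc, hGC]
    simp
    abel
  have hBR : Am * Gh + (C0 - s • 1) = 0 * Gh ^ C + (C0 - s • 1) * 1 + Am * Gh := by
    simp
    abel
  calc Z = cA * M + cB * Vmat n C G Gh := by
        rw [hZ, hcA, hBV, hM, Matrix.fromBlocks_multiply, ← Matrix.fromBlocks_add]
        conv_lhs => rw [hTL, hTR, hBL, hBR]
        rw [← Matrix.fromBlocks_add, ← Matrix.fromBlocks_add]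
    _ = (cA + cB * (-cC)⁻¹ * cD) * M := by
        rw [hVsolve, Matrix.add_mul, Matrix.mul_assoc, Matrix.mul_assoc]
end

section
/- Let s ∈ ℝ and let B₀, A₋₁, A₀, A₁, G, Ĝ, H be n×n real matrices satisfying A₋₁ + (A₀ − sI)G + A₁G² = 0, A₁ + (A₀ − sI)Ĝ + A₋₁Ĝ² = 0 and (A₀ − sI + A₁G + A₋₁Ĝ)H = −I. Let g : ℕ → ℝⁿ and suppose that for every k ≥ 0 the series Σ_{j=1}^{∞} Ĝʲ H g_{k+j} converges. Define ν_k = Σ_{j=0}^{k−1} Gʲ H g_{k−j} + Σ_{j=1}^{∞} Ĝʲ H g_{k+j} for k ≥ 0, assume (B₀ − sI) + A₁G is invertible, and set v = −((B₀ − sI) + A₁G)^{−1}(g₀ + (B₀ − sI)ν₀ + A₁ν₁). Then the vectors R_k = Gᵏ v + ν_k satisfy (B₀ − sI)R₀ + A₁R₁ = −g₀ and A₋₁R_{k−1} + (A₀ − sI)R_k + A₁R_{k+1} = −g_k for all k ≥ 1. -/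
open Matrix Finset

/-- (Corollary 3 of the paper, level-unbounded case.) With `G`, `Ĝ` (here `Gh`)
solving the `s`-shifted quadratic equations, `H = H₀(s)`, and convergent tails
`Σ_{j=1}^∞ Ĝʲ H g_{k+j}`, the vectors `R_k = Gᵏ v + ν_k`, where
`v = −((B₀−sI) + A₁G)⁻¹(g₀ + (B₀−sI)ν₀ + A₁ν₁)`, solve the level-unbounded block system.
`Am`, `A0`, `A1`, `B0` denote `A₋₁`, `A₀`, `A₁`, `B₀`. -/
theorem unbounded_laplace_reward_solution
    (n : ℕ) (s : ℝ) (B0 Am A0 A1 G Gh H : Matrix (Fin n) (Fin n) ℝ)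
    (hG : Am + (A0 - s • 1) * G + A1 * G ^ 2 = 0)
    (hGh : A1 + (A0 - s • 1) * Gh + Am * Gh ^ 2 = 0)
    (hH : (A0 - s • 1 + A1 * G + Am * Gh) * H = -1)
    (g : ℕ → Fin n → ℝ)
    (hsum : ∀ k : ℕ, Summable (fun j : ℕ => (Gh ^ (j + 1) * H) *ᵥ g (k + (j + 1))))
    (ν : ℕ → Fin n → ℝ)
    (hν : ∀ k, ν k =
      (∑ j ∈ Finset.range k, (G ^ j * H) *ᵥ g (k - j)) +
      (∑' j : ℕ, (Gh ^ (j + 1) * H) *ᵥ g (k + (j + 1))))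
    (hinv : IsUnit ((B0 - s • 1) + A1 * G))
    (v : Fin n → ℝ)
    (hv : v = -((B0 - s • 1) + A1 * G)⁻¹ *ᵥ
      (g 0 + (B0 - s • 1) *ᵥ ν 0 + A1 *ᵥ ν 1))
    (R : ℕ → Fin n → ℝ)
    (hR : ∀ k, R k = (G ^ k) *ᵥ v + ν k) :
    ((B0 - s • 1) *ᵥ R 0 + A1 *ᵥ R 1 = -g 0) ∧
    (∀ k, 1 ≤ k →
      Am *ᵥ R (k - 1) + (A0 - s • 1) *ᵥ R k + A1 *ᵥ R (k + 1) = -g k) := by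
  have mulVec_tsum : ∀ (A : Matrix (Fin n) (Fin n) ℝ) (f : ℕ → Fin n → ℝ), Summable f →
      A *ᵥ (∑' j, f j) = ∑' j, A *ᵥ f j := by
    intro A f hf
    have := ContinuousLinearMap.map_tsum (LinearMap.toContinuousLinearMap (Matrix.mulVecLin A)) hf
    simpa using this
  -- tail recursion
  have hT : ∀ k, (∑' j : ℕ, (Gh ^ (j + 1) * H) *ᵥ g (k + (j + 1)))
      = (Gh * H) *ᵥ g (k + 1)
        + Gh *ᵥ (∑' j : ℕ, (Gh ^ (j + 1) * H) *ᵥ g (k + 1 + (j + 1))) := by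
    intro k
    rw [Summable.tsum_eq_zero_add (hsum k)]
    congr 1
    · simp
    · rw [mulVec_tsum Gh _ (hsum (k + 1))]
      apply tsum_congr
      intro j
      rw [Matrix.mulVec_mulVec, show k + (j + 1 + 1) = k + 1 + (j + 1) from by omega,
        pow_succ', Matrix.mul_assoc]
  -- finite-sum recursion
  have hS : ∀ k, (∑ j ∈ Finset.range (k + 1), (G ^ j * H) *ᵥ g (k + 1 - j))
      = H *ᵥ g (k + 1) + G *ᵥ (∑ j ∈ Finset.range k, (G ^ j * H) *ᵥ g (k - j)) := by
    intro k
    rw [Finset.sum_range_succ']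
    rw [show G *ᵥ (∑ j ∈ Finset.range k, (G ^ j * H) *ᵥ g (k - j))
        = ∑ j ∈ Finset.range k, G *ᵥ ((G ^ j * H) *ᵥ g (k - j)) from
      map_sum (Matrix.mulVecLin G) _ _]
    rw [add_comm]
    congr 1
    · simp
    · apply Finset.sum_congr rfl
      intro j _
      rw [Matrix.mulVec_mulVec, show k + 1 - (j + 1) = k - j from by omega,
        pow_succ', Matrix.mul_assoc]
  constructor
  · -- boundary equation
    have hdet : IsUnit ((B0 - s • 1) + A1 * G).det :=
      (Matrix.isUnit_iff_isUnit_det _).mp hinv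
    have hmul : ((B0 - s • 1) + A1 * G) * ((B0 - s • 1) + A1 * G)⁻¹ = 1 :=
      Matrix.mul_nonsing_inv _ hdet
    have hvv : ((B0 - s • 1) + A1 * G) *ᵥ v
        = -(g 0 + (B0 - s • 1) *ᵥ ν 0 + A1 *ᵥ ν 1) := by
      rw [hv, Matrix.neg_mulVec, Matrix.mulVec_neg, Matrix.mulVec_mulVec, hmul,
        Matrix.one_mulVec]
    have h1 : (B0 - s • 1) *ᵥ R 0 + A1 *ᵥ R 1
        = ((B0 - s • 1) + A1 * G) *ᵥ v + ((B0 - s • 1) *ᵥ ν 0 + A1 *ᵥ ν 1) := by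
      rw [hR, hR]
      simp [Matrix.mulVec_add, Matrix.add_mulVec, Matrix.mulVec_mulVec]
      abel
    rw [h1, hvv]
    abel
  · -- interior equations
    intro k hk
    obtain ⟨m, rfl⟩ : ∃ m, k = m + 1 := ⟨k - 1, by omega⟩
    have hkm : m + 1 - 1 = m := by omega
    rw [hkm, hR, hR, hR, hν m, hν (m + 1), hν (m + 1 + 1)]
    rw [hT m, hT (m + 1), hS (m + 1), hS m]
    set x := ∑ j ∈ Finset.range m, (G ^ j * H) *ᵥ g (m - j) with hx
    set y := ∑' j : ℕ, (Gh ^ (j + 1) * H) *ᵥ g (m + 1 + 1 + (j + 1)) with hy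
    set a := g (m + 1) with ha
    set b := g (m + 1 + 1) with hb
    have key : Am *ᵥ (G ^ m *ᵥ v + (x + ((Gh * H) *ᵥ a + Gh *ᵥ ((Gh * H) *ᵥ b + Gh *ᵥ y))))
        + (A0 - s • 1) *ᵥ (G ^ (m + 1) *ᵥ v + (H *ᵥ a + G *ᵥ x + ((Gh * H) *ᵥ b + Gh *ᵥ y)))
        + A1 *ᵥ (G ^ (m + 1 + 1) *ᵥ v + (H *ᵥ b + G *ᵥ (H *ᵥ a + G *ᵥ x) + y))
        = ((Am + (A0 - s • 1) * G + A1 * G ^ 2) * G ^ m) *ᵥ v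
          + (Am + (A0 - s • 1) * G + A1 * G ^ 2) *ᵥ x
          + ((A0 - s • 1 + A1 * G + Am * Gh) * H) *ᵥ a
          + ((A1 + (A0 - s • 1) * Gh + Am * Gh ^ 2) * H) *ᵥ b
          + (A1 + (A0 - s • 1) * Gh + Am * Gh ^ 2) *ᵥ y := by
      simp only [Matrix.mulVec_add, Matrix.add_mulVec, Matrix.mulVec_mulVec,
        Matrix.add_mul, pow_two, pow_succ', mul_assoc, pow_zero, Matrix.mul_one, Matrix.one_mul]
      abel
    rw [key, hG, hGh, hH]
    simp [Matrix.neg_mulVec]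
end

section
/- Let C ≥ 1 and let B₀, A₋₁, A₀, A₁, C₀ be n×n real matrices; let Q be the (C+1)n×(C+1)n block tridiagonal matrix with level-0 diagonal block B₀, diagonal blocks A₀ at levels 1,…,C−1, level-C diagonal block C₀, superdiagonal blocks A₁ and subdiagonal blocks A₋₁. Let R and R̂ be n×n real matrices satisfying A₁ + R A₀ + R² A₋₁ = 0 and A₋₁ + R̂ A₀ + R̂² A₁ = 0. Suppose the row vectors v₀, v_C ∈ ℝⁿ satisfy v₀(B₀ + R A₋₁) + v_C R̂^{C−1}(R̂ B₀ + A₋₁) = 0 and v₀ R^{C−1}(R C₀ + A₁) + v_C(C₀ + R̂ A₁) = 0. Then the row vector π with level blocks π_k = v₀ Rᵏ + v_C R̂^{C−k}, for 0 ≤ k ≤ C, satisfies πQ = 0; that is, π₀B₀ + π₁A₋₁ = 0, π_{k−1}A₁ + π_k A₀ + π_{k+1}A₋₁ = 0 for 1 ≤ k ≤ C−1, and π_{C−1}A₁ + π_C C₀ = 0. -/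
open Matrix

/-- (Corollary 7 of the paper.) If `R`, `R̂` (here `Rh`) solve the row-vector
quadratic equations `A₁ + RA₀ + R²A₋₁ = 0` and `A₋₁ + R̂A₀ + R̂²A₁ = 0`, and the row vectors
`v₀`, `v_C` solve the indicated boundary system, then the row vector with level blocks
`π_k = v₀ Rᵏ + v_C R̂^{C−k}` satisfies `πQ = 0` for the block tridiagonal QBD generator `Q`;
that is, `π₀B₀ + π₁A₋₁ = 0`, `π_{k−1}A₁ + π_kA₀ + π_{k+1}A₋₁ = 0` for `1 ≤ k ≤ C−1`, and
`π_{C−1}A₁ + π_C C₀ = 0`. Here `Am`, `A0`, `A1`, `B0`, `C0` denote `A₋₁`, `A₀`, `A₁`, `B₀`,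
`C₀`, and `vC` denotes `v_C`. -/
theorem stationary_distribution_QBD_blocks
    (n : ℕ) (C : ℕ) (hC : 1 ≤ C)
    (B0 Am A0 A1 C0 : Matrix (Fin n) (Fin n) ℝ)
    (Q : Matrix (Fin (C + 1) × Fin n) (Fin (C + 1) × Fin n) ℝ)
    (hQ : ∀ p q : Fin (C + 1) × Fin n, Q p q =
      if p.1 = q.1 then
        (if (p.1 : ℕ) = 0 then B0 p.2 q.2
         else if (p.1 : ℕ) = C then C0 p.2 q.2
         else A0 p.2 q.2)
      else if (q.1 : ℕ) = (p.1 : ℕ) + 1 then A1 p.2 q.2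
      else if (p.1 : ℕ) = (q.1 : ℕ) + 1 then Am p.2 q.2
      else 0)
    (R Rh : Matrix (Fin n) (Fin n) ℝ)
    (hR : A1 + R * A0 + R ^ 2 * Am = 0)
    (hRh : Am + Rh * A0 + Rh ^ 2 * A1 = 0)
    (v0 vC : Fin n → ℝ)
    (hbc0 : v0 ᵥ* (B0 + R * Am) + vC ᵥ* (Rh ^ (C - 1) * (Rh * B0 + Am)) = 0)
    (hbcC : v0 ᵥ* (R ^ (C - 1) * (R * C0 + A1)) + vC ᵥ* (C0 + Rh * A1) = 0)
    (πb : ℕ → Fin n → ℝ)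
    (hπb : ∀ k, k ≤ C → πb k = v0 ᵥ* (R ^ k) + vC ᵥ* (Rh ^ (C - k)))
    (π : Fin (C + 1) × Fin n → ℝ)
    (hπ : ∀ p : Fin (C + 1) × Fin n, π p = πb (p.1 : ℕ) p.2) :
    π ᵥ* Q = 0 ∧
    (πb 0 ᵥ* B0 + πb 1 ᵥ* Am = 0) ∧
    (∀ k, 1 ≤ k → k ≤ C - 1 →
      πb (k - 1) ᵥ* A1 + πb k ᵥ* A0 + πb (k + 1) ᵥ* Am = 0) ∧
    (πb (C - 1) ᵥ* A1 + πb C ᵥ* C0 = 0) := by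
  -- power-shifted quadratic identities
  have hRpow : ∀ a : ℕ, R ^ a * A1 + R ^ (a + 1) * A0 + R ^ (a + 2) * Am = 0 := by
    intro a
    have h := congrArg (fun M => R ^ a * M) hR
    simp only [mul_add, mul_zero, ← mul_assoc, ← pow_succ, ← pow_add] at h
    exact h
  have hRhpow : ∀ b : ℕ, Rh ^ b * Am + Rh ^ (b + 1) * A0 + Rh ^ (b + 2) * A1 = 0 := by
    intro b
    have h := congrArg (fun M => Rh ^ b * M) hRh
    simp only [mul_add, mul_zero, ← mul_assoc, ← pow_succ, ← pow_add] at h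
    exact h
  -- the bottom boundary identity
  have e0 : πb 0 ᵥ* B0 + πb 1 ᵥ* Am = 0 := by
    have hM : Rh ^ (C - 1) * (Rh * B0 + Am) = Rh ^ C * B0 + Rh ^ (C - 1) * Am := by
      rw [mul_add, ← mul_assoc, ← pow_succ]
      congr 3
      omega
    rw [hπb 0 (by omega), hπb 1 hC]
    simp only [pow_zero, pow_one, Matrix.vecMul_one, Nat.sub_zero]
    rw [Matrix.add_vecMul, Matrix.add_vecMul, Matrix.vecMul_vecMul, Matrix.vecMul_vecMul]
    rw [Matrix.vecMul_add, hM, Matrix.vecMul_add] at hbc0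
    rw [← hbc0]
    simp only [Matrix.vecMul_vecMul]
    abel
  -- the interior identity
  have eInt : ∀ k, 1 ≤ k → k ≤ C - 1 →
      πb (k - 1) ᵥ* A1 + πb k ᵥ* A0 + πb (k + 1) ᵥ* Am = 0 := by
    intro k hk1 hk2
    obtain ⟨a, ha⟩ : ∃ a, k = a + 1 := ⟨k - 1, by omega⟩
    obtain ⟨b, hb⟩ : ∃ b, C - k = b + 1 := ⟨C - k - 1, by omega⟩
    have h1 : k - 1 = a := by omega
    have h2 : C - (k - 1) = b + 2 := by omega
    have h3 : k + 1 = a + 2 := by omega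
    have h4 : C - (k + 1) = b := by omega
    have p1 : πb (k - 1) = v0 ᵥ* R ^ a + vC ᵥ* Rh ^ (b + 2) := by
      rw [hπb (k - 1) (by omega), h1, show C - a = b + 2 by omega]
    have p2 : πb k = v0 ᵥ* R ^ (a + 1) + vC ᵥ* Rh ^ (b + 1) := by
      rw [hπb k (by omega), ha, show C - (a + 1) = b + 1 by omega]
    have p3 : πb (k + 1) = v0 ᵥ* R ^ (a + 2) + vC ᵥ* Rh ^ b := by
      rw [hπb (k + 1) (by omega), h3, show C - (a + 2) = b by omega]
    rw [p1, p2, p3]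
    rw [Matrix.add_vecMul, Matrix.add_vecMul, Matrix.add_vecMul]
    simp only [Matrix.vecMul_vecMul]
    have hLHS : (v0 ᵥ* (R ^ a * A1) + vC ᵥ* (Rh ^ (b + 2) * A1))
        + (v0 ᵥ* (R ^ (a + 1) * A0) + vC ᵥ* (Rh ^ (b + 1) * A0))
        + (v0 ᵥ* (R ^ (a + 2) * Am) + vC ᵥ* (Rh ^ b * Am))
        = v0 ᵥ* (R ^ a * A1 + R ^ (a + 1) * A0 + R ^ (a + 2) * Am)
          + vC ᵥ* (Rh ^ b * Am + Rh ^ (b + 1) * A0 + Rh ^ (b + 2) * A1) := by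
      simp only [Matrix.vecMul_add]
      abel
    rw [hLHS, hRpow a, hRhpow b]
    simp
  -- the top boundary identity
  have eC : πb (C - 1) ᵥ* A1 + πb C ᵥ* C0 = 0 := by
    have hM : R ^ (C - 1) * (R * C0 + A1) = R ^ C * C0 + R ^ (C - 1) * A1 := by
      rw [mul_add, ← mul_assoc, ← pow_succ]
      congr 3
      omega
    have h2 : C - (C - 1) = 1 := by omega
    rw [hπb (C - 1) (by omega), hπb C le_rfl, h2, Nat.sub_self]
    simp only [pow_zero, pow_one, Matrix.vecMul_one]
    rw [Matrix.add_vecMul, Matrix.add_vecMul, Matrix.vecMul_vecMul, Matrix.vecMul_vecMul]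
    rw [hM, Matrix.vecMul_add, Matrix.vecMul_add] at hbcC
    rw [← hbcC]
    simp only [Matrix.vecMul_vecMul]
    abel
  refine ⟨?_, e0, eInt, eC⟩
  -- the main computation : π ᵥ* Q = 0
  funext pj
  obtain ⟨q, j⟩ := pj
  -- helper sums
  have key : ∀ (m : ℕ) (hm : m < C + 1) (G : Fin (C + 1) → ℝ),
      (∑ l : Fin (C + 1), if (l : ℕ) = m then G l else 0) = G ⟨m, hm⟩ := by
    intro m hm G
    rw [Finset.sum_eq_single (⟨m, hm⟩ : Fin (C + 1))]
    · simp
    · intro b _ hb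
      rw [if_neg]
      simpa [Fin.ext_iff] using hb
    · simp
  have key0 : ∀ (m : ℕ), C + 1 ≤ m → ∀ (G : Fin (C + 1) → ℝ),
      (∑ l : Fin (C + 1), if (l : ℕ) = m then G l else 0) = 0 := by
    intro m hm G
    apply Finset.sum_eq_zero
    intro l _
    rw [if_neg]
    omega
  -- the diagonal block at level q
  set D : Matrix (Fin n) (Fin n) ℝ :=
    if (q : ℕ) = 0 then B0 else if (q : ℕ) = C then C0 else A0 with hD
  have inner : ∀ l : Fin (C + 1), (∑ i, π (l, i) * Q (l, i) (q, j)) =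
      (if (l : ℕ) = (q : ℕ) then (πb (l : ℕ) ᵥ* D) j else 0)
      + (if (l : ℕ) + 1 = (q : ℕ) then (πb (l : ℕ) ᵥ* A1) j else 0)
      + (if (l : ℕ) = (q : ℕ) + 1 then (πb (l : ℕ) ᵥ* Am) j else 0) := by
    intro l
    rcases eq_or_ne l q with h | h
    · subst h
      have c2 : ¬ ((l : ℕ) + 1 = (l : ℕ)) := by omega
      have c3 : ¬ ((l : ℕ) = (l : ℕ) + 1) := by omega
      rw [if_pos rfl, if_neg c2, if_neg c3, add_zero, add_zero]
      have hQd : ∀ i, Q (l, i) (l, j) = D i j := by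
        intro i
        rw [hQ, hD]
        simp only [if_pos rfl]
        split_ifs <;> rfl
      simp only [hπ, hQd, Matrix.vecMul, dotProduct]
    · have hne : (l : ℕ) ≠ (q : ℕ) := fun hv => h (Fin.ext hv)
      rw [if_neg hne]
      rcases eq_or_ne ((l : ℕ) + 1) (q : ℕ) with h2 | h2
      · have c3 : ¬ ((l : ℕ) = (q : ℕ) + 1) := by omega
        rw [if_pos h2, if_neg c3, zero_add, add_zero]
        simp only [hQ, if_neg h, if_pos h2.symm, hπ, Matrix.vecMul, dotProduct]
      · have h2' : ¬ ((q : ℕ) = (l : ℕ) + 1) := fun hv => h2 hv.symm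
        rcases eq_or_ne (l : ℕ) ((q : ℕ) + 1) with h3 | h3
        · rw [if_neg h2, if_pos h3, zero_add, zero_add]
          simp only [hQ, if_neg h, if_neg h2', if_pos h3, hπ,
            Matrix.vecMul, dotProduct]
        · rw [if_neg h2, if_neg h3]
          simp only [hQ, if_neg h, if_neg h2', if_neg h3,
            mul_zero, Finset.sum_const_zero, add_zero]
  have expand : (π ᵥ* Q) (q, j) = ∑ l : Fin (C + 1), ∑ i, π (l, i) * Q (l, i) (q, j) := by
    simp only [Matrix.vecMul, dotProduct]
    rw [Fintype.sum_prod_type]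
  show (π ᵥ* Q) (q, j) = 0
  rw [expand]
  simp only [inner]
  rw [Finset.sum_add_distrib, Finset.sum_add_distrib]
  rw [key (q : ℕ) q.isLt]
  have hq := q.isLt
  rcases eq_or_ne (q : ℕ) 0 with h0 | h0
  · -- level 0
    have s2 : (∑ l : Fin (C + 1), if (l : ℕ) + 1 = (q : ℕ) then (πb (l : ℕ) ᵥ* A1) j else 0)
        = 0 := by
      apply Finset.sum_eq_zero
      intro l _
      rw [if_neg (by omega)]
    have s3 : (∑ l : Fin (C + 1), if (l : ℕ) = (q : ℕ) + 1 then (πb (l : ℕ) ᵥ* Am) j else 0)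
        = (πb 1 ᵥ* Am) j := by
      have h1 : (q : ℕ) + 1 = 1 := by omega
      rw [h1, key 1 (by omega)]
    rw [s2, s3, add_zero]
    have hDB : D = B0 := by rw [hD, if_pos h0]
    rw [hDB, h0]
    have := congrFun e0 j
    simpa using this
  · rcases eq_or_ne (q : ℕ) C with hc | hc
    · -- level C
      have s2 : (∑ l : Fin (C + 1), if (l : ℕ) + 1 = (q : ℕ) then (πb (l : ℕ) ᵥ* A1) j else 0)
          = (πb (C - 1) ᵥ* A1) j := by
        have hcong : ∀ l : Fin (C + 1),
            (if (l : ℕ) + 1 = (q : ℕ) then (πb (l : ℕ) ᵥ* A1) j else 0)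
            = (if (l : ℕ) = C - 1 then (πb (l : ℕ) ᵥ* A1) j else 0) := by
          intro l
          congr 1
          simp only [eq_iff_iff]
          omega
        simp only [hcong]
        rw [key (C - 1) (by omega)]
      have s3 : (∑ l : Fin (C + 1), if (l : ℕ) = (q : ℕ) + 1 then (πb (l : ℕ) ᵥ* Am) j else 0)
          = 0 := by
        apply key0
        omega
      rw [s2, s3, add_zero]
      have hDC : D = C0 := by rw [hD, if_neg h0, if_pos hc]
      rw [hDC, hc]
      have := congrFun eC j
      simp only [Pi.add_apply, Pi.zero_apply] at this
      linarith
    · -- interior level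
      have s2 : (∑ l : Fin (C + 1), if (l : ℕ) + 1 = (q : ℕ) then (πb (l : ℕ) ᵥ* A1) j else 0)
          = (πb ((q : ℕ) - 1) ᵥ* A1) j := by
        have hcong : ∀ l : Fin (C + 1),
            (if (l : ℕ) + 1 = (q : ℕ) then (πb (l : ℕ) ᵥ* A1) j else 0)
            = (if (l : ℕ) = (q : ℕ) - 1 then (πb (l : ℕ) ᵥ* A1) j else 0) := by
          intro l
          congr 1
          simp only [eq_iff_iff]
          omega
        simp only [hcong]
        rw [key ((q : ℕ) - 1) (by omega)]
      have s3 : (∑ l : Fin (C + 1), if (l : ℕ) = (q : ℕ) + 1 then (πb (l : ℕ) ᵥ* Am) j else 0)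
          = (πb ((q : ℕ) + 1) ᵥ* Am) j := by
        rw [key ((q : ℕ) + 1) (by omega)]
      rw [s2, s3]
      have hDA : D = A0 := by rw [hD, if_neg h0, if_neg hc]
      rw [hDA]
      have := congrFun (eInt (q : ℕ) (by omega) (by omega)) j
      simp only [Pi.add_apply, Pi.zero_apply] at this
      linarith
end

section
/- Let Q be an m×m real matrix with Q𝟙 = 0, π ∈ ℝᵐ a row vector with πQ = 0 and π𝟙 = 1, and D an m×m real matrix with QD = 𝟙π − I, DQ = 𝟙π − I, πD = 0 and D𝟙 = 0. Let C₀ be an invertible n×n real matrix and M an n×m real matrix with M𝟙 = −C₀𝟙. Define the (m+n)×(m+n) block matrices T = [[Q, 0], [M, C₀]] and S = [[−D, 0], [C₀^{−1}(MD − 𝟙π), C₀^{−1}]]. Then S is the group inverse of T: T S T = T, S T S = S and S T = T S. -/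
open Matrix

/-- (Lemma 4 of the paper.) If `D` is the deviation matrix of the ergodic
generator `Q` with stationary row vector `π`, `C₀` (here `C0`) is invertible and
`M𝟙 = −C₀𝟙`, then `S = [[−D, 0], [C₀⁻¹(MD − 𝟙π), C₀⁻¹]]` is the group inverse of the
block lower-triangular generator `T = [[Q, 0], [M, C₀]]`. -/
theorem group_inverse_of_block_triangular_generator
    (m n : ℕ) (Q : Matrix (Fin m) (Fin m) ℝ)
    (hQ1 : Q *ᵥ (fun _ => (1 : ℝ)) = 0)
    (π : Fin m → ℝ)
    (hπQ : π ᵥ* Q = 0)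
    (hπ1 : π ⬝ᵥ (fun _ => (1 : ℝ)) = 1)
    (onePi : Matrix (Fin m) (Fin m) ℝ)
    (honePi : ∀ i j, onePi i j = π j)
    (D : Matrix (Fin m) (Fin m) ℝ)
    (hQD : Q * D = onePi - 1)
    (hDQ : D * Q = onePi - 1)
    (hπD : π ᵥ* D = 0)
    (hD1 : D *ᵥ (fun _ => (1 : ℝ)) = 0)
    (C0 : Matrix (Fin n) (Fin n) ℝ) (hC0 : IsUnit C0)
    (M : Matrix (Fin n) (Fin m) ℝ)
    (hM1 : M *ᵥ (fun _ => (1 : ℝ)) = -(C0 *ᵥ fun _ => (1 : ℝ)))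
    (onePi' : Matrix (Fin n) (Fin m) ℝ)
    (honePi' : ∀ i j, onePi' i j = π j)
    (T : Matrix (Fin m ⊕ Fin n) (Fin m ⊕ Fin n) ℝ)
    (hT : T = Matrix.fromBlocks Q 0 M C0)
    (S : Matrix (Fin m ⊕ Fin n) (Fin m ⊕ Fin n) ℝ)
    (hS : S = Matrix.fromBlocks (-D) 0 (C0⁻¹ * (M * D - onePi')) C0⁻¹) :
    T * S * T = T ∧ S * T * S = S ∧ S * T = T * S := by
  have hdet : IsUnit C0.det := (Matrix.isUnit_iff_isUnit_det C0).mp hC0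
  have hCCi : C0 * C0⁻¹ = 1 := Matrix.mul_nonsing_inv C0 hdet
  have hCiC : C0⁻¹ * C0 = 1 := Matrix.nonsing_inv_mul C0 hdet
  -- auxiliary matrix identities
  have hPQ : onePi * Q = 0 := by
    ext i j
    have := congrFun hπQ j
    simpa [Matrix.mul_apply, honePi, Matrix.vecMul, dotProduct] using this
  have hQP : Q * onePi = 0 := by
    ext i j
    have := congrFun hQ1 i
    simp only [Matrix.mulVec, dotProduct, mul_one, Pi.zero_apply] at this
    simp only [Matrix.mul_apply, honePi, Matrix.zero_apply]
    rw [← Finset.sum_mul, this, zero_mul]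
  have hPD : onePi * D = 0 := by
    ext i j
    have := congrFun hπD j
    simpa [Matrix.mul_apply, honePi, Matrix.vecMul, dotProduct] using this
  have hDP : D * onePi = 0 := by
    ext i j
    have := congrFun hD1 i
    simp only [Matrix.mulVec, dotProduct, mul_one, Pi.zero_apply] at this
    simp only [Matrix.mul_apply, honePi, Matrix.zero_apply]
    rw [← Finset.sum_mul, this, zero_mul]
  have hP'Q : onePi' * Q = 0 := by
    ext i j
    have := congrFun hπQ j
    simpa [Matrix.mul_apply, honePi', Matrix.vecMul, dotProduct] using this
  have hP'D : onePi' * D = 0 := by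
    ext i j
    have := congrFun hπD j
    simpa [Matrix.mul_apply, honePi', Matrix.vecMul, dotProduct] using this
  have hMP : M * onePi = -(C0 * onePi') := by
    ext i j
    have := congrFun hM1 i
    simp only [Matrix.mulVec, dotProduct, mul_one, Pi.neg_apply] at this
    simp only [Matrix.mul_apply, honePi, honePi', Matrix.neg_apply]
    rw [← Finset.sum_mul, ← Finset.sum_mul, this, neg_mul]
  -- compute T*S and S*T
  have hTS : T * S = Matrix.fromBlocks (1 - onePi) 0 (-onePi') 1 := by
    rw [hT, hS, Matrix.fromBlocks_multiply, Matrix.fromBlocks_inj]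
    refine ⟨?_, by simp, ?_, by simp [hCCi]⟩
    · rw [Matrix.mul_neg, hQD]; simp [neg_sub]
    · rw [Matrix.mul_neg, ← Matrix.mul_assoc, hCCi, Matrix.one_mul]
      abel
  have hST : S * T = Matrix.fromBlocks (1 - onePi) 0 (-onePi') 1 := by
    rw [hT, hS, Matrix.fromBlocks_multiply, Matrix.fromBlocks_inj]
    refine ⟨?_, by simp, ?_, by simp [hCiC]⟩
    · rw [Matrix.neg_mul, hDQ]; simp [neg_sub]
    · rw [Matrix.mul_assoc (C0⁻¹), Matrix.sub_mul, Matrix.mul_assoc M, hDQ, hP'Q,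
        Matrix.mul_sub M, hMP, Matrix.mul_one, sub_zero, Matrix.mul_sub (C0⁻¹),
        Matrix.mul_neg, ← Matrix.mul_assoc, hCiC, Matrix.one_mul]
      abel
  refine ⟨?_, ?_, by rw [hTS, hST]⟩
  · rw [hTS, hT, Matrix.fromBlocks_multiply, Matrix.fromBlocks_inj]
    refine ⟨?_, by simp, ?_, by simp⟩
    · rw [Matrix.sub_mul, hPQ, Matrix.one_mul]; simp
    · rw [Matrix.neg_mul, hP'Q]; simp
  · rw [hST, hS, Matrix.fromBlocks_multiply, Matrix.fromBlocks_inj]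
    refine ⟨?_, by simp, ?_, by simp⟩
    · rw [Matrix.mul_neg, Matrix.sub_mul, hPD, Matrix.one_mul, sub_zero]; simp
    · rw [Matrix.neg_mul, Matrix.mul_neg, hP'D]; simp
end

section
/- Let A and Ã be N×N real matrices, α and α̃ row vectors in ℝ^N, and A^{#} an N×N real matrix. Assume A·A^{#} = I − 𝟙α, α̃Ã = 0, and α̃𝟙 = 1. Then α̃(I + (Ã − A)A^{#}) = α. In particular, if I + (Ã − A)A^{#} is invertible, the stationary row vector of Ã is recovered from that of A as α̃ = α(I + (Ã − A)A^{#})^{−1}. -/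
open Matrix

/-- (Equation (19) of the paper.) If `AA# = I − 𝟙α`, `α̃Ã = 0` and
`α̃𝟙 = 1`, then `α̃(I + (Ã − A)A#) = α`; in particular, if `I + (Ã − A)A#` is invertible,
then `α̃ = α(I + (Ã − A)A#)⁻¹`. Here `At`, `αt`, `Asharp` denote `Ã`, `α̃`, `A#`. -/
theorem stationary_vector_of_perturbed_generator
    (N : ℕ) (A At : Matrix (Fin N) (Fin N) ℝ)
    (α αt : Fin N → ℝ)
    (Asharp : Matrix (Fin N) (Fin N) ℝ)
    (oneAlpha : Matrix (Fin N) (Fin N) ℝ)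
    (honeAlpha : ∀ i j, oneAlpha i j = α j)
    (hAAs : A * Asharp = 1 - oneAlpha)
    (hαtAt : αt ᵥ* At = 0)
    (hαt1 : αt ⬝ᵥ (fun _ => (1 : ℝ)) = 1) :
    αt ᵥ* ((1 : Matrix (Fin N) (Fin N) ℝ) + (At - A) * Asharp) = α ∧
    (IsUnit ((1 : Matrix (Fin N) (Fin N) ℝ) + (At - A) * Asharp) →
      αt = α ᵥ* ((1 : Matrix (Fin N) (Fin N) ℝ) + (At - A) * Asharp)⁻¹) := by
  have key : αt ᵥ* ((1 : Matrix (Fin N) (Fin N) ℝ) + (At - A) * Asharp) = α := by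
    have h1 : αt ᵥ* oneAlpha = α := by
      funext j
      simp only [vecMul, dotProduct]
      have : ∀ i, αt i * oneAlpha i j = αt i * α j := fun i => by rw [honeAlpha]
      rw [Finset.sum_congr rfl fun i _ => this i, ← Finset.sum_mul]
      have := hαt1
      simp only [dotProduct, mul_one] at this
      rw [this, one_mul]
    have : (At - A) * Asharp = At * Asharp - (1 - oneAlpha) := by
      rw [sub_mul, hAAs]
    rw [this]
    have h2 : αt ᵥ* (At * Asharp) = 0 := by
      rw [← vecMul_vecMul, hαtAt, zero_vecMul]
    funext j
    simp only [vecMul_add, vecMul_sub, vecMul_one, h2, h1]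
    simp
  refine ⟨key, fun hU => ?_⟩
  have := congrArg (· ᵥ* ((1 : Matrix (Fin N) (Fin N) ℝ) + (At - A) * Asharp)⁻¹) key
  simpa [vecMul_vecMul, Matrix.mul_nonsing_inv _ ((Matrix.isUnit_iff_isUnit_det _).mp hU)] using this
end

section
/- Let Q be an N×N real matrix, q and π̃ row vectors in ℝ^N, D an N×N real matrix, E an N×n real matrix and P an n×N real matrix. Assume: QD = 𝟙q − I; D𝟙 = 0; q𝟙 = 1; the matrix I − EPD is invertible; the perturbed matrix Q̃ = Q + EP satisfies Q̃𝟙 = 0; and π̃ = q(I − EPD)^{−1}. Then π̃𝟙 = 1 and the matrix D̃ = (I − 𝟙π̃) D (I − EPD)^{−1} satisfies Q̃D̃ = 𝟙π̃ − I and π̃D̃ = 0; that is, D̃ is the deviation matrix of the updated generator Q̃. -/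
open Matrix

/-- (Proposition 8 of the paper.) Let `Q` have stationary row vector `q` and
deviation matrix `D` (`QD = 𝟙q − I`, `D𝟙 = 0`, `q𝟙 = 1`), let `Q̃ = Q + EP` be a generator
(`Q̃𝟙 = 0`), assume `I − EPD` invertible and set `π̃ = q(I − EPD)⁻¹` (here `πt`). Then
`π̃𝟙 = 1` and `D̃ = (I − 𝟙π̃)D(I − EPD)⁻¹` satisfies `Q̃D̃ = 𝟙π̃ − I` and `π̃D̃ = 0`,
i.e. `D̃` is the deviation matrix of `Q̃`. -/
theorem deviation_matrix_of_updated_generator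
    (N n : ℕ) (Q : Matrix (Fin N) (Fin N) ℝ)
    (q πt : Fin N → ℝ)
    (D : Matrix (Fin N) (Fin N) ℝ)
    (E : Matrix (Fin N) (Fin n) ℝ) (P : Matrix (Fin n) (Fin N) ℝ)
    (oneQ : Matrix (Fin N) (Fin N) ℝ) (honeQ : ∀ i j, oneQ i j = q j)
    (onePit : Matrix (Fin N) (Fin N) ℝ) (honePit : ∀ i j, onePit i j = πt j)
    (hQD : Q * D = oneQ - 1)
    (hD1 : D *ᵥ (fun _ => (1 : ℝ)) = 0)
    (hq1 : q ⬝ᵥ (fun _ => (1 : ℝ)) = 1)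
    (hinv : IsUnit ((1 : Matrix (Fin N) (Fin N) ℝ) - E * P * D))
    (hQt1 : (Q + E * P) *ᵥ (fun _ => (1 : ℝ)) = 0)
    (hπt : πt = q ᵥ* ((1 : Matrix (Fin N) (Fin N) ℝ) - E * P * D)⁻¹) :
    πt ⬝ᵥ (fun _ => (1 : ℝ)) = 1 ∧
    (Q + E * P) * ((1 - onePit) * D * ((1 : Matrix (Fin N) (Fin N) ℝ) - E * P * D)⁻¹) =
      onePit - 1 ∧
    πt ᵥ* ((1 - onePit) * D * ((1 : Matrix (Fin N) (Fin N) ℝ) - E * P * D)⁻¹) = 0 := by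

  set M : Matrix (Fin N) (Fin N) ℝ := (1 : Matrix (Fin N) (Fin N) ℝ) - E * P * D with hMdef
  have hdet : IsUnit M.det := (Matrix.isUnit_iff_isUnit_det _).mp hinv
  have hMinvM : M⁻¹ * M = 1 := Matrix.nonsing_inv_mul M hdet
  have hMMinv : M * M⁻¹ = 1 := Matrix.mul_nonsing_inv M hdet
  have hM1 : M *ᵥ (fun _ => (1 : ℝ)) = (fun _ => (1 : ℝ)) := by
    rw [hMdef, Matrix.sub_mulVec, ← Matrix.mulVec_mulVec, hD1]
    simp
  have hMinv1 : M⁻¹ *ᵥ (fun _ => (1 : ℝ)) = (fun _ => (1 : ℝ)) := by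
    conv_lhs => rw [← hM1, Matrix.mulVec_mulVec, hMinvM, Matrix.one_mulVec]
  have h1 : πt ⬝ᵥ (fun _ => (1 : ℝ)) = 1 := by
    rw [hπt, ← Matrix.dotProduct_mulVec, hMinv1, hq1]
  have honePitMul : (Q + E * P) * onePit = 0 := by
    ext i j
    have := congrFun hQt1 i
    simp only [Matrix.mulVec, dotProduct, mul_one, Pi.zero_apply] at this
    simp only [Matrix.mul_apply, honePit, Matrix.zero_apply, ← Finset.sum_mul, this,
      zero_mul]
  have honeQMinv : oneQ * M⁻¹ = onePit := by
    ext i j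
    have := congrFun hπt j
    simp only [Matrix.vecMul, dotProduct] at this
    simp only [Matrix.mul_apply, honeQ, honePit, this]
  have h2 : (Q + E * P) * ((1 - onePit) * D * M⁻¹) = onePit - 1 := by
    have step1 : (Q + E * P) * (1 - onePit) = Q + E * P := by
      rw [Matrix.mul_sub, honePitMul, Matrix.mul_one, sub_zero]
    calc (Q + E * P) * ((1 - onePit) * D * M⁻¹)
        = ((Q + E * P) * (1 - onePit)) * D * M⁻¹ := by
          rw [Matrix.mul_assoc, Matrix.mul_assoc, Matrix.mul_assoc]
      _ = ((Q + E * P) * D) * M⁻¹ := by rw [step1]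
      _ = (oneQ - M) * M⁻¹ := by
          rw [add_mul, hQD, hMdef]; congr 1; abel
      _ = oneQ * M⁻¹ - M * M⁻¹ := by rw [Matrix.sub_mul]
      _ = onePit - 1 := by rw [honeQMinv, hMMinv]
  have h3 : πt ᵥ* ((1 - onePit) * D * M⁻¹) = 0 := by
    have hπOnePit : πt ᵥ* (1 - onePit) = 0 := by
      funext j
      simp only [Matrix.vecMul, dotProduct, Matrix.sub_apply, Matrix.one_apply,
        honePit, Pi.zero_apply, mul_sub, Finset.sum_sub_distrib, ← Finset.sum_mul]
      have := h1
      simp only [dotProduct, mul_one] at this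
      simp [this, Finset.sum_ite_eq', mul_comm]
    rw [← Matrix.vecMul_vecMul, ← Matrix.vecMul_vecMul, hπOnePit]
    simp
  exact ⟨h1, h2, h3⟩
end
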